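/- Let z be a submodular function on I and P a preorder on I. The face Φ_z(P) = {x ∈ Π(z) : x_A = z(A) for every down-set A of P} is nonempty if and only if P is compatible with z. In that case Φ_z(P) = Π(z_P). If moreover P conforms to z, then the dimension of this face equals |I| − |b(P)|, where |b(P)| is the number of bubbles of P. -/

import Mathlib

open scoped Classical

/-- A preorder on `X`, bundled as a reflexive and transitive relation. -/
structure Preo (X : Type*) where
  le : X → X → Prop
  le_refl : ∀ x, le x x
  le_trans : ∀ {x y z}, le x y → le y z → le x z

namespace Preo

variable {X : Type*}

/-- The refinement partial order `P ⪯ Q` on preorders: `x ≤_P y` implies `x ≤_Q y`. -/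
def Le (P Q : Preo X) : Prop := ∀ ⦃a b⦄, P.le a b → Q.le a b

/-- The opposite preorder. -/
def op (P : Preo X) : Preo X where
  le a b := P.le b a
  le_refl x := P.le_refl x
  le_trans h h' := P.le_trans h' h

/-- The meet (pointwise intersection) of two preorders. -/
def meet (P Q : Preo X) : Preo X where
  le a b := P.le a b ∧ Q.le a b
  le_refl x := ⟨P.le_refl x, Q.le_refl x⟩
  le_trans h h' := ⟨P.le_trans h.1 h'.1, Q.le_trans h.2 h'.2⟩

/-- The join of two preorders: zigzag chains, i.e. the reflexive-transitive closure
of the union of the two relations. -/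
def join (P Q : Preo X) : Preo X where
  le a b := Relation.ReflTransGen (fun u v => P.le u v ∨ Q.le u v) a b
  le_refl _ := Relation.ReflTransGen.refl
  le_trans h h' := Relation.ReflTransGen.trans h h'

/-- The bubble relation: `a` and `b` lie in the same bubble of `P`. -/
def bubRel (P : Preo X) (a b : X) : Prop := P.le a b ∧ P.le b a

/-- `R ◁ P` : `R` is a subdivision of `P`, i.e. `R ⪯ P` and `R = P ∧ (P^op ∨ R)`. -/
def Subdiv (R P : Preo X) : Prop := R.Le P ∧ R = P.meet (P.op.join R)

/-- `P ◀ Q` : `Q` is a contraction of `P`, i.e. `P ⪯ Q` and `Q = P ∨ (P^op ∧ Q)`. -/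
def Contr (P Q : Preo X) : Prop := P.Le Q ∧ Q = P.join (P.op.meet Q)

/-- `K` is a convex subset for the preorder `P`. -/
def ConvexIn (P : Preo X) (K : Set X) : Prop :=
  ∀ ⦃x y z⦄, x ∈ K → y ∈ K → P.le x z → P.le z y → z ∈ K

/-- `K` is connected for (the restriction to `K` of) the preorder `P`:
any two of its elements are joined by a zigzag chain of comparabilities within `K`. -/
def ConnectedIn (P : Preo X) (K : Set X) : Prop :=
  ∀ ⦃x y⦄, x ∈ K → y ∈ K →
    Relation.ReflTransGen (fun u v => u ∈ K ∧ v ∈ K ∧ (P.le u v ∨ P.le v u)) x y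

/-- A total preorder. -/
def Total (P : Preo X) : Prop := ∀ a b, P.le a b ∨ P.le b a

/-- `L` is a linear extension of `P`: `L` is total, `P ⪯ L`, and the bubbles coincide. -/
def IsLinExt (P L : Preo X) : Prop :=
  L.Total ∧ P.Le L ∧ ∀ a b, P.bubRel a b ↔ L.bubRel a b

/-- A finite down-set of the preorder `P`. -/
def IsDownset (P : Preo X) (A : Finset X) : Prop :=
  ∀ ⦃x y⦄, y ∈ A → P.le x y → x ∈ A

/-- A convex finite subset of the preorder `P`. -/
def ConvexF (P : Preo X) (C : Finset X) : Prop :=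
  ∀ ⦃x y z⦄, x ∈ C → y ∈ C → P.le x z → P.le z y → z ∈ C

/-- The down-set generated by a finite set `C`. -/
noncomputable def downClosure [Fintype X] (P : Preo X) (C : Finset X) : Finset X :=
  Finset.univ.filter (fun x => ∃ y ∈ C, P.le x y)

/-- The bubble of an element `a`. -/
noncomputable def bubble [Fintype X] (P : Preo X) (a : X) : Finset X :=
  Finset.univ.filter (fun x => P.le a x ∧ P.le x a)

/-- The set of bubbles of `P`. -/
noncomputable def bubbles [Fintype X] (P : Preo X) : Finset (Finset X) :=
  Finset.univ.image (fun a => P.bubble a)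

/-- `R` is a positive sub-preorder of `P`: in any loop
`x = x₀ ≤_R x₁ ≥_P x₂ ≤_R ⋯ ≤_R x_{2k-1} ≥_P x_{2k} = x`,
every descending step `≥_P` is actually `≥_R`. -/
def PositiveSub (R P : Preo X) : Prop :=
  ∀ (k : ℕ) (x : ℕ → X), x (2 * k) = x 0 →
    (∀ i < k, R.le (x (2 * i)) (x (2 * i + 1))) →
    (∀ i < k, P.le (x (2 * i + 2)) (x (2 * i + 1))) →
    ∀ i < k, R.le (x (2 * i + 2)) (x (2 * i + 1))

end Preo

section Submod

variable {I : Type*} [Fintype I] [DecidableEq I]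

/-- A function `z : P(I) → ℝ ∪ {∞}` is submodular if
`z(S ∪ T) + z(S ∩ T) ≤ z(S) + z(T)` for all `S, T`. -/
def Submodular (z : Finset I → WithTop ℝ) : Prop :=
  ∀ S T : Finset I, z (S ∪ T) + z (S ∩ T) ≤ z S + z T

/-- The corestriction `z_{/A}` : `U ↦ z(A ∪ U) − z(A)` (meaningful when `z A ≠ ⊤`). -/
noncomputable def coRes (z : Finset I → WithTop ℝ) (A U : Finset I) : WithTop ℝ :=
  z (A ∪ U) + ((-(z A).untopD 0 : ℝ) : WithTop ℝ)

/-- The extended generalized permutahedron of `z`: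
`x_I = z(I)` and `x_A ≤ z(A)` whenever `z(A) < ∞`. -/
def EGP (z : Finset I → WithTop ℝ) : Set (I → ℝ) :=
  {x | ((∑ i, x i : ℝ) : WithTop ℝ) = z Finset.univ ∧
       ∀ A : Finset I, ((∑ i ∈ A, x i : ℝ) : WithTop ℝ) ≤ z A}

/-- `z` restricted to subsets of `C` decomposes as the product of its restrictions to `S`
and `T`, where `C = S ⊔ T`. -/
def SplitsAlong (z : Finset I → WithTop ℝ) (C S T : Finset I) : Prop :=
  Disjoint S T ∧ S ∪ T = C ∧ ∀ E ⊆ C, z E = z (E ∩ S) + z (E ∩ T)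

/-- `z` restricted to subsets of `C` is indecomposable. -/
def IndecompOn (z : Finset I → WithTop ℝ) (C : Finset I) : Prop :=
  ∀ S T : Finset I, S.Nonempty → T.Nonempty → ¬ SplitsAlong z C S T

/-- `fam` is the partition underlying a factorization of `z` into indecomposable
extended Boolean functions. -/
def IsIndecompFactorization (z : Finset I → WithTop ℝ) (fam : Finset (Finset I)) : Prop :=
  (∀ B ∈ fam, B.Nonempty) ∧
  (∀ B ∈ fam, ∀ B' ∈ fam, B ≠ B' → Disjoint B B') ∧
  fam.sup id = Finset.univ ∧
  (∀ E : Finset I, z E = ∑ B ∈ fam, z (E ∩ B)) ∧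
  ∀ B ∈ fam, IndecompOn z B

/-- A family of finite subsets of `I` forming a topology on `I`. -/
def IsTopologyFam (F : Set (Finset I)) : Prop :=
  ∅ ∈ F ∧ Finset.univ ∈ F ∧ (∀ A ∈ F, ∀ B ∈ F, A ∪ B ∈ F) ∧ ∀ A ∈ F, ∀ B ∈ F, A ∩ B ∈ F

/-- The preorder `P` is compatible with the submodular function `z`. -/
def Compatible (z : Finset I → WithTop ℝ) (P : Preo I) : Prop :=
  (∀ A : Finset I, P.IsDownset A → z A ≠ ⊤) ∧
  ∀ A B : Finset I, P.IsDownset A → P.IsDownset B → A ⊆ B →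
    ∀ C₁ C₂ : Finset I, Disjoint C₁ C₂ → C₁ ∪ C₂ = B \ A →
      (∀ x ∈ C₁, ∀ y ∈ C₂, ¬ P.le x y ∧ ¬ P.le y x) →
      ∀ U ⊆ B \ A, coRes z A U = coRes z A (U ∩ C₁) + coRes z A (U ∩ C₂)

/-- For a convex subset `C` of `P`, the function `z_C : U ↦ z(A ∪ U) − z(A)`, where
`A = (↓C) \ C` with `↓C` the down-set generated by `C`. -/
noncomputable def zConv (z : Finset I → WithTop ℝ) (P : Preo I) (C U : Finset I) :
    WithTop ℝ :=
  coRes z (P.downClosure C \ C) U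

/-- The preorder `P` conforms to the submodular function `z`: it is compatible with `z`
and every product decomposition of `z_C`, for `C` convex in `P`, comes from a
disconnected decomposition of the preorder induced on `C`. -/
def Conforms (z : Finset I → WithTop ℝ) (P : Preo I) : Prop :=
  Compatible z P ∧
  ∀ C : Finset I, P.ConvexF C →
    ∀ C₁ C₂ : Finset I, Disjoint C₁ C₂ → C₁ ∪ C₂ = C →
      (∀ U ⊆ C, zConv z P C U = zConv z P C (U ∩ C₁) + zConv z P C (U ∩ C₂)) →
      ∀ x ∈ C₁, ∀ y ∈ C₂, ¬ P.le x y ∧ ¬ P.le y x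

/-- The preorder `pre(z)` associated to `z`: `x ≤ y` iff every `A` with `z(A) < ∞`
("open set") containing `y` contains `x`. -/
def preZ (z : Finset I → WithTop ℝ) : Preo I where
  le x y := ∀ A : Finset I, z A ≠ ⊤ → y ∈ A → x ∈ A
  le_refl _ := fun _ _ h => h
  le_trans h h' := fun A hA hy => h A hA (h' A hA hy)

/-- The preorder associated (by the Alexandroff correspondence) to a family of subsets. -/
def preOfFam (F : Set (Finset I)) : Preo I where
  le x y := ∀ A ∈ F, y ∈ A → x ∈ A
  le_refl _ := fun _ _ h => h
  le_trans h h' := fun A hA hy => h A hA (h' A hA hy)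

/-- `Alin(P, z)`: the affine space cut out by `x_A = z(A)` for `A` a down-set of `P`. -/
def Alin (z : Finset I → WithTop ℝ) (P : Preo I) : Set (I → ℝ) :=
  {x | ∀ A : Finset I, P.IsDownset A → ((∑ i ∈ A, x i : ℝ) : WithTop ℝ) = z A}

/-- `AlinBu(P, z)`: the affine space cut out by `x_C = z_C(C)` for `C` a bubble of `P`. -/
def AlinBu (z : Finset I → WithTop ℝ) (P : Preo I) : Set (I → ℝ) :=
  {x | ∀ a : I, ((∑ i ∈ P.bubble a, x i : ℝ) : WithTop ℝ) = zConv z P (P.bubble a) (P.bubble a)}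

/-- `Φ_z(P)`: the (possibly empty) face of `Π(z)` cut out by the equalities `x_A = z(A)`
for `A` a down-set of `P`. -/
def Phi (z : Finset I → WithTop ℝ) (P : Preo I) : Set (I → ℝ) :=
  {x | x ∈ EGP z ∧ ∀ A : Finset I, P.IsDownset A → ((∑ i ∈ A, x i : ℝ) : WithTop ℝ) = z A}

/-- `Ψ_z(G)`: the family of sets `A` with `z(A) < ∞` on which `x_A = z(A)` for all `x ∈ G`. -/
def PsiFam (z : Finset I → WithTop ℝ) (G : Set (I → ℝ)) : Set (Finset I) :=
  {A | z A ≠ ⊤ ∧ ∀ x ∈ G, ((∑ i ∈ A, x i : ℝ) : WithTop ℝ) = z A}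

/-- `Ψ_z(G)` as a preorder. -/
def PsiPre (z : Finset I → WithTop ℝ) (G : Set (I → ℝ)) : Preo I :=
  preOfFam (PsiFam z G)

/-- `z_P = ∏_{C ∈ b(P)} z_C`: the product over all bubbles of `P`. -/
noncomputable def zP (z : Finset I → WithTop ℝ) (P : Preo I) : Finset I → WithTop ℝ :=
  fun E => ∑ C ∈ P.bubbles, zConv z P C (E ∩ C)

/-- The restriction `z|_S` of `z` to subsets of `S`. -/
def restrictFn (z : Finset I → WithTop ℝ) (S : Finset I) :
    Finset {x : I // x ∈ S} → WithTop ℝ :=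
  fun U => z (U.map (Function.Embedding.subtype fun x => x ∈ S))

/-- The corestriction `z_{/S}` of `z`, on subsets of `I ∖ S`. -/
noncomputable def coresFn (z : Finset I → WithTop ℝ) (S : Finset I) :
    Finset {x : I // x ∉ S} → WithTop ℝ :=
  fun U => z (S ∪ U.map (Function.Embedding.subtype fun x => x ∉ S)) +
    ((-(z S).untopD 0 : ℝ) : WithTop ℝ)

/-- The restriction `P|_S` of a preorder to `S`. -/
def restrictPre (P : Preo I) (S : Finset I) : Preo {x : I // x ∈ S} where
  le a b := P.le a b
  le_refl a := P.le_refl a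
  le_trans h h' := P.le_trans h h'

/-- The corestriction `P_{/S}` of a preorder, on `I ∖ S`. -/
def coresPre (P : Preo I) (S : Finset I) : Preo {x : I // x ∉ S} where
  le a b := P.le a b
  le_refl a := P.le_refl a
  le_trans h h' := P.le_trans h h'

end Submod
set_option linter.unusedSectionVars false
section Helpers
section Helpers

variable {I : Type*} [Fintype I] [DecidableEq I]

open Finset

namespace Preo

variable (P : Preo I)

lemma mem_bubble {a x : I} : x ∈ P.bubble a ↔ P.le a x ∧ P.le x a := by
  simp [bubble]

lemma self_mem_bubble (a : I) : a ∈ P.bubble a :=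
  (P.mem_bubble).mpr ⟨P.le_refl a, P.le_refl a⟩

lemma bubble_eq_of_mem {a b : I} (h : b ∈ P.bubble a) : P.bubble b = P.bubble a := by
  rw [P.mem_bubble] at h
  ext x
  rw [P.mem_bubble, P.mem_bubble]
  exact ⟨fun ⟨h1, h2⟩ => ⟨P.le_trans h.1 h1, P.le_trans h2 h.2⟩,
         fun ⟨h1, h2⟩ => ⟨P.le_trans h.2 h1, P.le_trans h2 h.1⟩⟩

lemma mem_bubbles {C : Finset I} : C ∈ P.bubbles ↔ ∃ a, P.bubble a = C := by
  simp [bubbles]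

lemma bubbles_nonempty {C : Finset I} (h : C ∈ P.bubbles) : C.Nonempty := by
  obtain ⟨a, ha⟩ := (P.mem_bubbles).mp h
  exact ⟨a, ha ▸ P.self_mem_bubble a⟩

lemma bubble_disjoint {a b : I} (h : P.bubble a ≠ P.bubble b) :
    Disjoint (P.bubble a) (P.bubble b) := by
  rw [Finset.disjoint_left]
  intro x hxa hxb
  exact h ((P.bubble_eq_of_mem hxa).symm.trans (P.bubble_eq_of_mem hxb))

lemma bubbles_disjoint {C C' : Finset I} (hC : C ∈ P.bubbles) (hC' : C' ∈ P.bubbles)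
    (h : C ≠ C') : Disjoint C C' := by
  obtain ⟨a, rfl⟩ := (P.mem_bubbles).mp hC
  obtain ⟨b, rfl⟩ := (P.mem_bubbles).mp hC'
  exact P.bubble_disjoint h

lemma mem_downClosure {C : Finset I} {x : I} :
    x ∈ P.downClosure C ↔ ∃ y ∈ C, P.le x y := by
  simp [downClosure]

lemma isDownset_downClosure (C : Finset I) : P.IsDownset (P.downClosure C) := by
  intro x y hy hxy
  rw [P.mem_downClosure] at hy ⊢
  obtain ⟨c, hc, hyc⟩ := hy
  exact ⟨c, hc, P.le_trans hxy hyc⟩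

lemma subset_downClosure (C : Finset I) : C ⊆ P.downClosure C := by
  intro x hx
  exact (P.mem_downClosure).mpr ⟨x, hx, P.le_refl x⟩

lemma isDownset_strict (a : I) :
    P.IsDownset (P.downClosure (P.bubble a) \ P.bubble a) := by
  intro x y hy hxy
  rw [Finset.mem_sdiff] at hy ⊢
  obtain ⟨c, hc, hyc⟩ := (P.mem_downClosure).mp hy.1
  rw [P.mem_bubble] at hc
  refine ⟨(P.mem_downClosure).mpr ⟨c, (P.mem_bubble).mpr hc, P.le_trans hxy hyc⟩, ?_⟩
  intro hx
  rw [P.mem_bubble] at hx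
  -- then a ≤ x ≤ y and y ≤ c ≤ a, so y ∈ bubble a, contradiction
  exact hy.2 ((P.mem_bubble).mpr ⟨P.le_trans hx.1 hxy, P.le_trans hyc hc.2⟩)

lemma strict_union (a : I) :
    (P.downClosure (P.bubble a) \ P.bubble a) ∪ P.bubble a = P.downClosure (P.bubble a) := by
  rw [Finset.sdiff_union_self_eq_union]
  exact Finset.union_eq_left.mpr (P.subset_downClosure _)

lemma strict_disjoint (a : I) :
    Disjoint (P.downClosure (P.bubble a) \ P.bubble a) (P.bubble a) :=
  Finset.sdiff_disjoint

lemma downset_bubble_subset {A : Finset I} (hA : P.IsDownset A) {a : I} (ha : a ∈ A) :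
    P.bubble a ⊆ A := by
  intro x hx
  exact hA ha ((P.mem_bubble).mp hx).2

lemma downset_inter_bubble {A C : Finset I} (hA : P.IsDownset A) (hC : C ∈ P.bubbles) :
    A ∩ C = ∅ ∨ C ⊆ A := by
  obtain ⟨a, rfl⟩ := (P.mem_bubbles).mp hC
  by_cases h : A ∩ P.bubble a = ∅
  · exact Or.inl h
  · right
    obtain ⟨x, hx⟩ := Finset.nonempty_iff_ne_empty.mpr h
    rw [Finset.mem_inter] at hx
    have : P.bubble x = P.bubble a := P.bubble_eq_of_mem hx.2
    rw [← this]
    exact P.downset_bubble_subset hA hx.1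

lemma exists_max : ∀ (D : Finset I), D.Nonempty → ∃ a ∈ D, ∀ y ∈ D, P.le a y → P.le y a := by
  intro D
  induction D using Finset.strongInduction with
  | _ D ih =>
    intro hD
    obtain ⟨a₀, ha₀⟩ := hD
    by_cases h : ∀ y ∈ D, P.le a₀ y → P.le y a₀
    · exact ⟨a₀, ha₀, h⟩
    · push_neg at h
      obtain ⟨y, hy, hay, hya⟩ := h
      have hss : D.filter (fun w => P.le y w) ⊂ D := by
        rw [Finset.ssubset_iff_of_subset (Finset.filter_subset _ _)]
        exact ⟨a₀, ha₀, fun hmem => hya ((Finset.mem_filter.mp hmem).2)⟩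
      obtain ⟨a, ha, hmax⟩ := ih _ hss ⟨y, Finset.mem_filter.mpr ⟨hy, P.le_refl y⟩⟩
      refine ⟨a, (Finset.mem_filter.mp ha).1, ?_⟩
      intro w hw haw
      have hyw : P.le y w := P.le_trans (Finset.mem_filter.mp ha).2 haw
      exact hmax w (Finset.mem_filter.mpr ⟨hw, hyw⟩) haw

end Preo

end Helpers
section Chunk2

variable {I : Type*} [Fintype I] [DecidableEq I]

open Finset

lemma wt_ex {a : WithTop ℝ} (h : a ≠ ⊤) : ∃ r : ℝ, a = ↑r := by
  obtain ⟨r, hr⟩ := WithTop.ne_top_iff_exists.mp h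
  exact ⟨r, hr.symm⟩

lemma wt_add_le_coe {a b : WithTop ℝ} {r : ℝ} (h : a + b ≤ ↑r) : a ≠ ⊤ ∧ b ≠ ⊤ := by
  constructor
  · rintro rfl
    simp at h
  · rintro rfl
    simp at h

lemma submod_ne_top {z : Finset I → WithTop ℝ} (hsub : Submodular z) {S T : Finset I}
    (hS : z S ≠ ⊤) (hT : z T ≠ ⊤) : z (S ∪ T) ≠ ⊤ ∧ z (S ∩ T) ≠ ⊤ := by
  obtain ⟨s, hs⟩ := wt_ex hS
  obtain ⟨t, ht⟩ := wt_ex hT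
  have h := hsub S T
  rw [hs, ht, ← WithTop.coe_add] at h
  exact wt_add_le_coe h

set_option maxHeartbeats 1000000 in
lemma additivity_of_modular {z : Finset I → WithTop ℝ} (hsub : Submodular z)
    {A C₁ C₂ : Finset I} (hd : Disjoint C₁ C₂)
    {rA rB r1 r2 : ℝ}
    (hA : z A = ↑rA) (hB : z (A ∪ C₁ ∪ C₂) = ↑rB)
    (h1 : z (A ∪ C₁) = ↑r1) (h2 : z (A ∪ C₂) = ↑r2)
    (hmod : r1 + r2 = rA + rB)
    {U : Finset I} (hU : U ⊆ C₁ ∪ C₂) :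
    z (A ∪ U) + z A = z (A ∪ U ∩ C₁) + z (A ∪ U ∩ C₂) := by
  have hUt : ∀ t : I, t ∈ U → t ∈ C₁ ∨ t ∈ C₂ := fun t ht => Finset.mem_union.mp (hU ht)
  have hdt : ∀ t : I, t ∈ C₁ → t ∉ C₂ := fun t ht => Finset.disjoint_left.mp hd ht
  have e1 : (A ∪ U ∩ C₁) ∪ (A ∪ U ∩ C₂) = A ∪ U := by
    ext t; have := hUt t; have := hdt t; simp only [Finset.mem_union, Finset.mem_inter]; tauto
  have e2 : (A ∪ U ∩ C₁) ∩ (A ∪ U ∩ C₂) = A := by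
    ext t; have := hUt t; have := hdt t; simp only [Finset.mem_union, Finset.mem_inter]; tauto
  have e3 : (A ∪ U) ∪ (A ∪ C₁) = (A ∪ C₁) ∪ (U ∩ C₂) := by
    ext t; have := hUt t; have := hdt t; simp only [Finset.mem_union, Finset.mem_inter]; tauto
  have e4 : (A ∪ U) ∩ (A ∪ C₁) = A ∪ U ∩ C₁ := by
    ext t; have := hUt t; have := hdt t; simp only [Finset.mem_union, Finset.mem_inter]; tauto
  have e5 : ((A ∪ C₁) ∪ (U ∩ C₂)) ∪ (A ∪ C₂) = A ∪ C₁ ∪ C₂ := by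
    ext t; have := hUt t; have := hdt t; simp only [Finset.mem_union, Finset.mem_inter]; tauto
  have e6 : ((A ∪ C₁) ∪ (U ∩ C₂)) ∩ (A ∪ C₂) = A ∪ U ∩ C₂ := by
    ext t; have := hUt t; have := hdt t; simp only [Finset.mem_union, Finset.mem_inter]; tauto
  have e3' : (A ∪ U) ∪ (A ∪ C₂) = (A ∪ C₂) ∪ (U ∩ C₁) := by
    ext t; have := hUt t; have := hdt t; simp only [Finset.mem_union, Finset.mem_inter]; tauto
  have e4' : (A ∪ U) ∩ (A ∪ C₂) = A ∪ U ∩ C₂ := by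
    ext t; have := hUt t; have := hdt t; simp only [Finset.mem_union, Finset.mem_inter]; tauto
  have le0 : z (A ∪ U) + z A ≤ z (A ∪ U ∩ C₁) + z (A ∪ U ∩ C₂) := by
    have h := hsub (A ∪ U ∩ C₁) (A ∪ U ∩ C₂)
    rwa [e1, e2] at h
  have ile1 : z ((A ∪ C₁) ∪ (U ∩ C₂)) + z (A ∪ U ∩ C₁) ≤ z (A ∪ U) + ↑r1 := by
    have h := hsub (A ∪ U) (A ∪ C₁)
    rwa [e3, e4, h1] at h
  have ile1' : z ((A ∪ C₂) ∪ (U ∩ C₁)) + z (A ∪ U ∩ C₂) ≤ z (A ∪ U) + ↑r2 := by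
    have h := hsub (A ∪ U) (A ∪ C₂)
    rwa [e3', e4', h2] at h
  have ile2 : (↑rB : WithTop ℝ) + z (A ∪ U ∩ C₂) ≤ z ((A ∪ C₁) ∪ (U ∩ C₂)) + ↑r2 := by
    have h := hsub ((A ∪ C₁) ∪ (U ∩ C₂)) (A ∪ C₂)
    rwa [e5, e6, hB, h2] at h
  by_cases ht1 : z (A ∪ U ∩ C₁) = ⊤
  · have hU' : z (A ∪ U) = ⊤ := by
      by_contra hne
      obtain ⟨r, hr⟩ := wt_ex hne
      rw [ht1, hr, WithTop.add_top, ← WithTop.coe_add, top_le_iff] at ile1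
      exact WithTop.coe_ne_top ile1
    rw [hU', hA, ht1]
    simp only [WithTop.top_add]
  by_cases ht2 : z (A ∪ U ∩ C₂) = ⊤
  · have hU' : z (A ∪ U) = ⊤ := by
      by_contra hne
      obtain ⟨r, hr⟩ := wt_ex hne
      rw [ht2, hr, WithTop.add_top, ← WithTop.coe_add, top_le_iff] at ile1'
      exact WithTop.coe_ne_top ile1'
    rw [hU', hA, ht2]
    simp only [WithTop.top_add, WithTop.add_top]
  obtain ⟨s1, hs1⟩ := wt_ex ht1
  obtain ⟨s2, hs2⟩ := wt_ex ht2
  have hUne : z (A ∪ U) ≠ ⊤ := by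
    intro h
    rw [h, hA, hs1, hs2, WithTop.top_add, ← WithTop.coe_add, top_le_iff] at le0
    exact WithTop.coe_ne_top le0
  obtain ⟨rU, hrU⟩ := wt_ex hUne
  have hXne : z ((A ∪ C₁) ∪ (U ∩ C₂)) ≠ ⊤ := by
    intro h
    rw [h, hrU, hs1, WithTop.top_add, ← WithTop.coe_add, top_le_iff] at ile1
    exact WithTop.coe_ne_top ile1
  obtain ⟨rX, hrX⟩ := wt_ex hXne
  rw [hrU, hrX, hs1] at ile1
  rw [hrX, hs2] at ile2
  rw [hrU, hA, hs1, hs2] at le0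
  rw [hrU, hA, hs1, hs2]
  have i1 : rX + s1 ≤ rU + r1 := by exact_mod_cast ile1
  have i2 : rB + s2 ≤ rX + r2 := by exact_mod_cast ile2
  have i0 : rU + rA ≤ s1 + s2 := by exact_mod_cast le0
  have : rU + rA = s1 + s2 := by linarith
  exact_mod_cast this

lemma coRes_repr {z : Finset I → WithTop ℝ} {A : Finset I} {rA : ℝ} (hA : z A = ↑rA)
    (U : Finset I) : coRes z A U = z (A ∪ U) + ↑(-rA) := by
  rw [coRes, hA]
  rfl

lemma coRes_split_of_eq {z : Finset I → WithTop ℝ} {A U U₁ U₂ : Finset I} {rA : ℝ}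
    (hA : z A = ↑rA)
    (h : z (A ∪ U) + z A = z (A ∪ U₁) + z (A ∪ U₂)) :
    coRes z A U = coRes z A U₁ + coRes z A U₂ := by
  rw [coRes_repr hA, coRes_repr hA, coRes_repr hA]
  by_cases ht1 : z (A ∪ U₁) = ⊤
  · have hU' : z (A ∪ U) = ⊤ := by
      by_contra hne
      obtain ⟨r, hr⟩ := wt_ex hne
      rw [hr, hA, ht1, WithTop.top_add, ← WithTop.coe_add] at h
      exact WithTop.coe_ne_top h
    rw [hU', ht1]
    simp only [WithTop.top_add]
  by_cases ht2 : z (A ∪ U₂) = ⊤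
  · have hU' : z (A ∪ U) = ⊤ := by
      by_contra hne
      obtain ⟨r, hr⟩ := wt_ex hne
      rw [hr, hA, ht2, WithTop.add_top, ← WithTop.coe_add] at h
      exact WithTop.coe_ne_top h
    rw [hU', ht2]
    simp only [WithTop.top_add, WithTop.add_top]
  obtain ⟨s1, hs1⟩ := wt_ex ht1
  obtain ⟨s2, hs2⟩ := wt_ex ht2
  have hUne : z (A ∪ U) ≠ ⊤ := by
    intro h'
    rw [h', hA, hs1, hs2, WithTop.top_add, ← WithTop.coe_add] at h
    exact WithTop.top_ne_coe h
  obtain ⟨rU, hrU⟩ := wt_ex hUne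
  rw [hrU, hs1, hs2, hA] at h
  rw [hrU, hs1, hs2]
  have h' : rU + rA = s1 + s2 := by exact_mod_cast h
  have : rU + (-rA) = (s1 + (-rA)) + (s2 + (-rA)) := by linarith
  exact_mod_cast this

lemma eq_of_coRes_split {z : Finset I → WithTop ℝ} {A U U₁ U₂ : Finset I} {rA : ℝ}
    (hA : z A = ↑rA)
    (h : coRes z A U = coRes z A U₁ + coRes z A U₂) :
    z (A ∪ U) + z A = z (A ∪ U₁) + z (A ∪ U₂) := by
  rw [coRes_repr hA, coRes_repr hA, coRes_repr hA] at h
  by_cases ht1 : z (A ∪ U₁) = ⊤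
  · have hU' : z (A ∪ U) = ⊤ := by
      by_contra hne
      obtain ⟨r, hr⟩ := wt_ex hne
      rw [hr, ht1, WithTop.top_add, ← WithTop.coe_add] at h
      exact WithTop.coe_ne_top h
    rw [hU', ht1, hA]
    simp only [WithTop.top_add]
  by_cases ht2 : z (A ∪ U₂) = ⊤
  · have hU' : z (A ∪ U) = ⊤ := by
      by_contra hne
      obtain ⟨r, hr⟩ := wt_ex hne
      rw [hr, ht2, WithTop.top_add, WithTop.add_top, ← WithTop.coe_add] at h
      exact WithTop.coe_ne_top h
    rw [hU', ht2, hA]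
    simp only [WithTop.top_add, WithTop.add_top]
  obtain ⟨s1, hs1⟩ := wt_ex ht1
  obtain ⟨s2, hs2⟩ := wt_ex ht2
  have hUne : z (A ∪ U) ≠ ⊤ := by
    intro h'
    rw [h', hs1, hs2, WithTop.top_add, ← WithTop.coe_add, ← WithTop.coe_add, ← WithTop.coe_add] at h
    exact WithTop.top_ne_coe h
  obtain ⟨rU, hrU⟩ := wt_ex hUne
  rw [hrU, hs1, hs2] at h
  rw [hrU, hs1, hs2, hA]
  have h' : rU + (-rA) = (s1 + (-rA)) + (s2 + (-rA)) := by exact_mod_cast h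
  have : rU + rA = s1 + s2 := by linarith
  exact_mod_cast this

end Chunk2
section Chunk3

variable {I : Type*} [Fintype I] [DecidableEq I] {z : Finset I → WithTop ℝ} {P : Preo I}

open Finset

lemma compat_fin (hc : Compatible z P) {A : Finset I} (hA : P.IsDownset A) :
    ∃ r : ℝ, z A = ↑r := wt_ex (hc.1 A hA)

lemma strict_subset_downset {a : I} {D : Finset I}
    (hDB : P.IsDownset (D ∪ P.bubble a)) :
    P.downClosure (P.bubble a) \ P.bubble a ⊆ D := by
  intro y hy
  rw [Finset.mem_sdiff] at hy
  obtain ⟨c, hc', hyc⟩ := (P.mem_downClosure).mp hy.1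
  have hcB : c ∈ D ∪ P.bubble a := Finset.mem_union_right _ hc'
  have hyB : y ∈ D ∪ P.bubble a := hDB hcB hyc
  rcases Finset.mem_union.mp hyB with h | h
  · exact h
  · exact absurd h hy.2

lemma compat_shift (hc : Compatible z P) {a : I} {D : Finset I}
    (hD : P.IsDownset D) (hDC : Disjoint D (P.bubble a))
    (hDB : P.IsDownset (D ∪ P.bubble a))
    (hmax : ∀ y ∈ D, P.le a y → P.le y a)
    {V : Finset I} (hV : V ⊆ P.bubble a) :
    z (D ∪ V) + z (P.downClosure (P.bubble a) \ P.bubble a)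
      = z ((P.downClosure (P.bubble a) \ P.bubble a) ∪ V) + z D := by
  set C : Finset I := P.bubble a with hCdef
  set A : Finset I := P.downClosure C \ C with hAdef
  have hAds : P.IsDownset A := P.isDownset_strict a
  have hAD : A ⊆ D := strict_subset_downset hDB
  have hAC : Disjoint A C := Finset.sdiff_disjoint
  have hAB : A ⊆ D ∪ C := hAD.trans Finset.subset_union_left
  have hDCt : ∀ t : I, t ∈ D → t ∉ C := fun t ht => Finset.disjoint_left.mp hDC ht
  have hADt : ∀ t : I, t ∈ A → t ∈ D := fun t ht => hAD ht
  have hACt : ∀ t : I, t ∈ A → t ∉ C := fun t ht => Finset.disjoint_left.mp hAC ht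
  have hVt : ∀ t : I, t ∈ V → t ∈ C := fun t ht => hV ht
  have hunion : C ∪ (D \ A) = (D ∪ C) \ A := by
    ext t
    have := hDCt t; have := hADt t; have := hACt t
    simp only [Finset.mem_union, Finset.mem_sdiff]
    tauto
  have hnorel : ∀ x ∈ C, ∀ y ∈ D \ A, ¬ P.le x y ∧ ¬ P.le y x := by
    intro x hx y hy
    rw [Finset.mem_sdiff] at hy
    have hax : P.le a x := ((P.mem_bubble).mp hx).1
    have hya : ∀ hya : P.le y a, False := by
      intro hya
      have : y ∈ P.downClosure C := (P.mem_downClosure).mpr ⟨a, P.self_mem_bubble a, hya⟩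
      by_cases hyC : y ∈ C
      · exact hDCt y hy.1 hyC
      · exact hy.2 (Finset.mem_sdiff.mpr ⟨this, hyC⟩)
    constructor
    · intro hxy
      exact hya (hmax y hy.1 (P.le_trans hax hxy))
    · intro hyx
      exact hya (P.le_trans hyx ((P.mem_bubble).mp hx).2)
  have hsplit := hc.2 A (D ∪ C) hAds hDB hAB C (D \ A)
    (Finset.disjoint_of_subset_right Finset.sdiff_subset hDC.symm) hunion hnorel
    (V ∪ (D \ A))
    (by
      rw [← hunion]
      exact Finset.union_subset_union_left hV)
  have hUC : (V ∪ (D \ A)) ∩ C = V := by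
    ext t
    have := hDCt t; have := hVt t
    simp only [Finset.mem_union, Finset.mem_inter, Finset.mem_sdiff]
    tauto
  have hUC2 : (V ∪ (D \ A)) ∩ (D \ A) = D \ A := by
    ext t
    have := hDCt t; have := hVt t
    simp only [Finset.mem_union, Finset.mem_inter, Finset.mem_sdiff]
    tauto
  rw [hUC, hUC2] at hsplit
  obtain ⟨rA, hrA⟩ := compat_fin hc hAds
  have heq := eq_of_coRes_split hrA hsplit
  have hAU : A ∪ (V ∪ (D \ A)) = D ∪ V := by
    ext t
    have := hADt t
    simp only [Finset.mem_union, Finset.mem_sdiff]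
    tauto
  have hAD2 : A ∪ (D \ A) = D := by
    ext t
    have := hADt t
    simp only [Finset.mem_union, Finset.mem_sdiff]
    tauto
  rw [hAU, hAD2] at heq
  exact heq

lemma zConv_repr {a : I} {r : ℝ}
    (hr : z (P.downClosure (P.bubble a) \ P.bubble a) = ↑r) (U : Finset I) :
    zConv z P (P.bubble a) U = z ((P.downClosure (P.bubble a) \ P.bubble a) ∪ U) + ↑(-r) := by
  rw [zConv]
  exact coRes_repr hr U

lemma zConv_empty (hc : Compatible z P) {C : Finset I} (hC : C ∈ P.bubbles) :
    zConv z P C ∅ = 0 := by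
  obtain ⟨a, rfl⟩ := (P.mem_bubbles).mp hC
  obtain ⟨r, hr⟩ := compat_fin hc (P.isDownset_strict a)
  rw [zConv_repr hr, Finset.union_empty, hr, ← WithTop.coe_add]
  norm_num

lemma downset_sdiff_bubble {A : Finset I} (hA : P.IsDownset A) {a : I} (ha : a ∈ A)
    (hmax : ∀ y ∈ A, P.le a y → P.le y a) : P.IsDownset (A \ P.bubble a) := by
  intro x y hy hxy
  rw [Finset.mem_sdiff] at hy ⊢
  refine ⟨hA hy.1 hxy, ?_⟩
  intro hxC
  have hax : P.le a x := ((P.mem_bubble).mp hxC).1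
  have hay : P.le a y := P.le_trans hax hxy
  exact hy.2 ((P.mem_bubble).mpr ⟨hay, hmax y hy.1 hay⟩)

lemma zP_downset (hz0 : z ∅ = 0) (hc : Compatible z P) :
    ∀ A : Finset I, P.IsDownset A → zP z P A = z A := by
  intro A
  induction A using Finset.strongInduction with
  | _ A ih =>
    intro hA
    rcases Finset.eq_empty_or_nonempty A with rfl | hne
    · have hz : ∀ C ∈ P.bubbles, zConv z P C (∅ ∩ C) = 0 := fun C hC => by
        rw [Finset.empty_inter]; exact zConv_empty hc hC
      show ∑ C ∈ P.bubbles, zConv z P C (∅ ∩ C) = z ∅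
      rw [Finset.sum_congr rfl hz, Finset.sum_const_zero, hz0]
    · obtain ⟨aM, haM, hmax⟩ := P.exists_max A hne
      have hCA : P.bubble aM ⊆ A := P.downset_bubble_subset hA haM
      have hA'ds : P.IsDownset (A \ P.bubble aM) := downset_sdiff_bubble hA haM hmax
      have hAeq : (A \ P.bubble aM) ∪ P.bubble aM = A := Finset.sdiff_union_of_subset hCA
      have hssub : A \ P.bubble aM ⊂ A :=
        Finset.sdiff_ssubset hCA ⟨aM, P.self_mem_bubble aM⟩
      have hIH : zP z P (A \ P.bubble aM) = z (A \ P.bubble aM) := ih _ hssub hA'ds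
      have hshift := compat_shift hc (a := aM) hA'ds Finset.sdiff_disjoint
        (by rw [hAeq]; exact hA)
        (fun y hy => hmax y (Finset.sdiff_subset hy)) (Finset.Subset.refl (P.bubble aM))
      rw [hAeq] at hshift
      -- hshift : z A + z Aa = z (Aa ∪ C) + z A'
      have hCbub : P.bubble aM ∈ P.bubbles := (P.mem_bubbles).mpr ⟨aM, rfl⟩
      have hsum : zP z P A = zConv z P (P.bubble aM) (A ∩ P.bubble aM)
          + ∑ C' ∈ P.bubbles.erase (P.bubble aM), zConv z P C' (A ∩ C') :=
        (Finset.add_sum_erase _ (fun C' => zConv z P C' (A ∩ C')) hCbub).symm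
      have hsum' : zP z P (A \ P.bubble aM)
          = zConv z P (P.bubble aM) ((A \ P.bubble aM) ∩ P.bubble aM)
          + ∑ C' ∈ P.bubbles.erase (P.bubble aM), zConv z P C' ((A \ P.bubble aM) ∩ C') :=
        (Finset.add_sum_erase _ (fun C' => zConv z P C' ((A \ P.bubble aM) ∩ C')) hCbub).symm
      have hinterC : A ∩ P.bubble aM = P.bubble aM := Finset.inter_eq_right.mpr hCA
      have hinterC' : (A \ P.bubble aM) ∩ P.bubble aM = ∅ := by
        ext t; simp only [Finset.mem_inter, Finset.mem_sdiff, Finset.notMem_empty]; tauto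
      have herase : ∀ C' ∈ P.bubbles.erase (P.bubble aM),
          zConv z P C' (A ∩ C') = zConv z P C' ((A \ P.bubble aM) ∩ C') := by
        intro C' hC'
        have hne' : C' ≠ P.bubble aM := Finset.ne_of_mem_erase hC'
        have hdisj : Disjoint C' (P.bubble aM) :=
          P.bubbles_disjoint (Finset.mem_of_mem_erase hC') hCbub hne'
        have : A ∩ C' = (A \ P.bubble aM) ∩ C' := by
          ext t
          have h1 : t ∈ C' → t ∉ P.bubble aM := fun ht => Finset.disjoint_left.mp hdisj ht
          simp only [Finset.mem_inter, Finset.mem_sdiff]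
          tauto
        rw [this]
      rw [Finset.sum_congr rfl herase, hinterC] at hsum
      rw [hinterC', zConv_empty hc hCbub, zero_add] at hsum'
      rw [hsum, ← hsum', hIH]
      -- goal : zConv C C + z A' = z A
      obtain ⟨raa, hraa⟩ := compat_fin hc (P.isDownset_strict aM)
      rw [zConv_repr hraa]
      obtain ⟨rA, hrA⟩ := compat_fin hc hA
      obtain ⟨rA', hrA'⟩ := compat_fin hc hA'ds
      obtain ⟨rdc, hrdc⟩ := compat_fin hc (P.isDownset_downClosure (P.bubble aM))
      have hrdc' : z ((P.downClosure (P.bubble aM) \ P.bubble aM) ∪ P.bubble aM) = ↑rdc := by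
        rw [P.strict_union aM]; exact hrdc
      rw [hrA, hraa, hrdc', hrA'] at hshift
      rw [hrdc', hrA', hrA]
      have h1 : rA + raa = rdc + rA' := by exact_mod_cast hshift
      have h2 : rdc + (-raa) + rA' = rA := by linarith
      exact_mod_cast h2

end Chunk3
section Chunk4

variable {I : Type*} [Fintype I] [DecidableEq I] {z : Finset I → WithTop ℝ} {P : Preo I}

open Finset

lemma zP_empty (hz0 : z ∅ = 0) (hc : Compatible z P) : zP z P ∅ = 0 := by
  rw [zP_downset hz0 hc ∅ (fun x y hy _ => absurd hy (Finset.notMem_empty _)), hz0]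

lemma isDownset_univ : P.IsDownset (Finset.univ : Finset I) :=
  fun x _ _ _ => Finset.mem_univ x

lemma zP_univ (hz0 : z ∅ = 0) (hc : Compatible z P) :
    zP z P Finset.univ = z Finset.univ :=
  zP_downset hz0 hc Finset.univ isDownset_univ

lemma zP_restrict_le (hz0 : z ∅ = 0) (hsub : Submodular z) (hc : Compatible z P) :
    ∀ D : Finset I, P.IsDownset D → ∀ E : Finset I, z (E ∩ D) ≠ ⊤ →
      ∑ C ∈ P.bubbles.filter (· ⊆ D), zConv z P C (E ∩ C) ≤ z (E ∩ D) := by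
  intro D
  induction D using Finset.strongInduction with
  | _ D ih =>
    intro hD E hED
    rcases Finset.eq_empty_or_nonempty D with rfl | hne
    · have : P.bubbles.filter (· ⊆ (∅ : Finset I)) = ∅ := by
        rw [Finset.filter_eq_empty_iff]
        intro C hC hsubC
        obtain ⟨t, ht⟩ := P.bubbles_nonempty hC
        exact absurd (hsubC ht) (Finset.notMem_empty t)
      rw [this, Finset.sum_empty, Finset.inter_empty, hz0]
    · obtain ⟨aM, haM, hmax⟩ := P.exists_max D hne
      have hCD : P.bubble aM ⊆ D := P.downset_bubble_subset hD haM
      have hD'ds : P.IsDownset (D \ P.bubble aM) := downset_sdiff_bubble hD haM hmax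
      have hDeq : (D \ P.bubble aM) ∪ P.bubble aM = D := Finset.sdiff_union_of_subset hCD
      have hssub : D \ P.bubble aM ⊂ D :=
        Finset.sdiff_ssubset hCD ⟨aM, P.self_mem_bubble aM⟩
      have hCbub : P.bubble aM ∈ P.bubbles := (P.mem_bubbles).mpr ⟨aM, rfl⟩
      obtain ⟨rD', hrD'⟩ := compat_fin hc hD'ds
      -- finiteness of z (E ∩ D')
      have hED' : z (E ∩ (D \ P.bubble aM)) ≠ ⊤ := by
        have h2 := (submod_ne_top hsub hED (hrD' ▸ WithTop.coe_ne_top)).2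
        have : (E ∩ D) ∩ (D \ P.bubble aM) = E ∩ (D \ P.bubble aM) := by
          ext t; simp only [Finset.mem_inter, Finset.mem_sdiff]; tauto
        rwa [this] at h2
      have hIH := ih _ hssub hD'ds E hED'
      -- filter split
      have hfilter : P.bubbles.filter (· ⊆ D)
          = insert (P.bubble aM) (P.bubbles.filter (· ⊆ D \ P.bubble aM)) := by
        ext C'
        simp only [Finset.mem_filter, Finset.mem_insert]
        constructor
        · rintro ⟨hC', hsubD⟩
          by_cases he : C' = P.bubble aM
          · exact Or.inl he
          · right
            refine ⟨hC', ?_⟩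
            intro t ht
            have : t ∉ P.bubble aM :=
              fun htb => Finset.disjoint_left.mp (P.bubbles_disjoint hC' hCbub he) ht htb
            exact Finset.mem_sdiff.mpr ⟨hsubD ht, this⟩
        · rintro (rfl | ⟨hC', hsubD'⟩)
          · exact ⟨hCbub, hCD⟩
          · exact ⟨hC', hsubD'.trans Finset.sdiff_subset⟩
      have hnotmem : P.bubble aM ∉ P.bubbles.filter (· ⊆ D \ P.bubble aM) := by
        rw [Finset.mem_filter]
        rintro ⟨-, hsub'⟩
        have := hsub' (P.self_mem_bubble aM)
        rw [Finset.mem_sdiff] at this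
        exact this.2 (P.self_mem_bubble aM)
      rw [hfilter, Finset.sum_insert hnotmem]
      -- shift identity
      have hshift := compat_shift hc (a := aM) hD'ds Finset.sdiff_disjoint
        (by rw [hDeq]; exact hD)
        (fun y hy => hmax y (Finset.sdiff_subset hy))
        (Finset.inter_subset_right : E ∩ P.bubble aM ⊆ P.bubble aM)
      -- hshift : z (D' ∪ V) + z Aa = z (Aa ∪ V) + z D'   with V := E ∩ bubble aM
      obtain ⟨raa, hraa⟩ := compat_fin hc (P.isDownset_strict aM)
      -- diminishing returns : z (D' ∪ V) + z (E ∩ D') ≤ z D' + z (E ∩ D)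
      have hdim : z ((D \ P.bubble aM) ∪ (E ∩ P.bubble aM)) + z (E ∩ (D \ P.bubble aM))
          ≤ z (D \ P.bubble aM) + z (E ∩ D) := by
        have h := hsub (D \ P.bubble aM) ((E ∩ (D \ P.bubble aM)) ∪ (E ∩ P.bubble aM))
        have e1 : (D \ P.bubble aM) ∪ ((E ∩ (D \ P.bubble aM)) ∪ (E ∩ P.bubble aM))
            = (D \ P.bubble aM) ∪ (E ∩ P.bubble aM) := by
          ext t; simp only [Finset.mem_union, Finset.mem_inter, Finset.mem_sdiff]; tauto
        have e2 : (D \ P.bubble aM) ∩ ((E ∩ (D \ P.bubble aM)) ∪ (E ∩ P.bubble aM))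
            = E ∩ (D \ P.bubble aM) := by
          ext t; simp only [Finset.mem_union, Finset.mem_inter, Finset.mem_sdiff]; tauto
        have e3 : (E ∩ (D \ P.bubble aM)) ∪ (E ∩ P.bubble aM) = E ∩ D := by
          have := hDeq
          ext t
          simp only [Finset.mem_union, Finset.mem_inter, Finset.mem_sdiff]
          constructor
          · rintro (⟨h1, h2, -⟩ | ⟨h1, h2⟩)
            · exact ⟨h1, h2⟩
            · exact ⟨h1, hCD h2⟩
          · rintro ⟨h1, h2⟩
            by_cases hb : t ∈ P.bubble aM
            · exact Or.inr ⟨h1, hb⟩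
            · exact Or.inl ⟨h1, h2, hb⟩
        rw [e1, e2, e3] at h
        exact h
      -- z (D' ∪ V) finite
      obtain ⟨e', hre'⟩ := wt_ex hED'
      obtain ⟨e, hre⟩ := wt_ex hED
      have hDV : z ((D \ P.bubble aM) ∪ (E ∩ P.bubble aM)) ≠ ⊤ := by
        intro htop
        rw [htop, hre', hrD', hre, WithTop.top_add, ← WithTop.coe_add, top_le_iff] at hdim
        exact WithTop.coe_ne_top hdim
      obtain ⟨v, hrv⟩ := wt_ex hDV
      -- zConv value
      have hzconv : zConv z P (P.bubble aM) (E ∩ P.bubble aM) = ↑(v + (-rD')) := by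
        rw [zConv_repr hraa]
        rw [hrv, hraa, hrD'] at hshift
        have h1 : z ((P.downClosure (P.bubble aM) \ P.bubble aM) ∪ (E ∩ P.bubble aM)) ≠ ⊤ := by
          intro htop
          rw [htop, WithTop.top_add, ← WithTop.coe_add] at hshift
          exact WithTop.coe_ne_top hshift
        obtain ⟨w, hrw⟩ := wt_ex h1
        rw [hrw] at hshift ⊢
        have : v + raa = w + rD' := by exact_mod_cast hshift
        have : w + (-raa) = v + (-rD') := by linarith
        exact_mod_cast this
      -- conclude
      have hSumFin : ∑ C ∈ P.bubbles.filter (· ⊆ D \ P.bubble aM), zConv z P C (E ∩ C) ≠ ⊤ := by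
        intro htop
        rw [htop, hre', top_le_iff] at hIH
        exact WithTop.coe_ne_top hIH
      obtain ⟨s', hrs'⟩ := wt_ex hSumFin
      rw [hzconv, hrs', hre]
      rw [hre', hrs'] at hIH
      rw [hrv, hre', hrD', hre] at hdim
      have i1 : s' ≤ e' := by exact_mod_cast hIH
      have i2 : v + e' ≤ rD' + e := by exact_mod_cast hdim
      have : (v + (-rD')) + s' ≤ e := by linarith
      exact_mod_cast this

lemma zP_le_z (hz0 : z ∅ = 0) (hsub : Submodular z) (hc : Compatible z P) (E : Finset I) :
    zP z P E ≤ z E := by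
  by_cases hE : z E = ⊤
  · rw [hE]; exact le_top
  · have h := zP_restrict_le hz0 hsub hc Finset.univ isDownset_univ E
      (by rwa [Finset.inter_univ])
    rw [Finset.inter_univ] at h
    have hfil : P.bubbles.filter (· ⊆ Finset.univ) = P.bubbles :=
      Finset.filter_true_of_mem (fun C _ => Finset.subset_univ C)
    rw [hfil] at h
    exact h

lemma zP_submodular (hsub : Submodular z) : Submodular (zP z P) := by
  intro S T
  show ∑ C ∈ P.bubbles, zConv z P C ((S ∪ T) ∩ C) + ∑ C ∈ P.bubbles, zConv z P C ((S ∩ T) ∩ C)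
    ≤ ∑ C ∈ P.bubbles, zConv z P C (S ∩ C) + ∑ C ∈ P.bubbles, zConv z P C (T ∩ C)
  rw [← Finset.sum_add_distrib, ← Finset.sum_add_distrib]
  refine Finset.sum_le_sum ?_
  intro C _
  show zConv z P C ((S ∪ T) ∩ C) + zConv z P C ((S ∩ T) ∩ C)
    ≤ zConv z P C (S ∩ C) + zConv z P C (T ∩ C)
  unfold zConv coRes
  have h := hsub ((P.downClosure C \ C) ∪ (S ∩ C)) ((P.downClosure C \ C) ∪ (T ∩ C))
  have e1 : ((P.downClosure C \ C) ∪ (S ∩ C)) ∪ ((P.downClosure C \ C) ∪ (T ∩ C))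
      = (P.downClosure C \ C) ∪ ((S ∪ T) ∩ C) := by
    ext t; simp only [Finset.mem_union, Finset.mem_inter]; tauto
  have e2 : ((P.downClosure C \ C) ∪ (S ∩ C)) ∩ ((P.downClosure C \ C) ∪ (T ∩ C))
      = (P.downClosure C \ C) ∪ ((S ∩ T) ∩ C) := by
    ext t; simp only [Finset.mem_union, Finset.mem_inter]; tauto
  rw [e1, e2] at h
  calc z ((P.downClosure C \ C) ∪ ((S ∪ T) ∩ C)) + ((-(z (P.downClosure C \ C)).untopD 0 : ℝ) : WithTop ℝ)
        + (z ((P.downClosure C \ C) ∪ ((S ∩ T) ∩ C)) + ((-(z (P.downClosure C \ C)).untopD 0 : ℝ) : WithTop ℝ))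
      = (z ((P.downClosure C \ C) ∪ ((S ∪ T) ∩ C)) + z ((P.downClosure C \ C) ∪ ((S ∩ T) ∩ C)))
        + (((-(z (P.downClosure C \ C)).untopD 0 : ℝ) : WithTop ℝ) + ((-(z (P.downClosure C \ C)).untopD 0 : ℝ) : WithTop ℝ)) := by
        rw [add_add_add_comm]
    _ ≤ (z ((P.downClosure C \ C) ∪ (S ∩ C)) + z ((P.downClosure C \ C) ∪ (T ∩ C)))
        + (((-(z (P.downClosure C \ C)).untopD 0 : ℝ) : WithTop ℝ) + ((-(z (P.downClosure C \ C)).untopD 0 : ℝ) : WithTop ℝ)) := by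
        exact add_le_add_left h _
    _ = z ((P.downClosure C \ C) ∪ (S ∩ C)) + ((-(z (P.downClosure C \ C)).untopD 0 : ℝ) : WithTop ℝ)
        + (z ((P.downClosure C \ C) ∪ (T ∩ C)) + ((-(z (P.downClosure C \ C)).untopD 0 : ℝ) : WithTop ℝ)) := by
        rw [add_add_add_comm]

end Chunk4
section Chunk5

variable {I : Type*} [Fintype I] [DecidableEq I] {z : Finset I → WithTop ℝ} {P : Preo I}

open Finset

lemma phi_zfin {x : I → ℝ} (hx : x ∈ Phi z P) {A : Finset I} (hA : P.IsDownset A) :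
    z A ≠ ⊤ := by
  rw [← hx.2 A hA]
  exact WithTop.coe_ne_top

lemma sum_over_bubbles (P : Preo I) (x : I → ℝ) (E : Finset I) :
    ∑ C ∈ P.bubbles, (∑ i ∈ E ∩ C, x i) = ∑ i ∈ E, x i := by
  rw [← Finset.sum_fiberwise_of_maps_to (g := fun i => P.bubble i)
    (fun i _ => (P.mem_bubbles (C := P.bubble i)).mpr ⟨i, rfl⟩) x]
  refine Finset.sum_congr rfl ?_
  intro C hC
  congr 1
  ext t
  simp only [Finset.mem_filter, Finset.mem_inter]
  constructor
  · rintro ⟨ht, htC⟩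
    obtain ⟨a, rfl⟩ := (P.mem_bubbles).mp hC
    exact ⟨ht, P.bubble_eq_of_mem htC⟩
  · rintro ⟨ht, heq⟩
    exact ⟨ht, heq ▸ P.self_mem_bubble t⟩

lemma phi_eq_EGP (hz0 : z ∅ = 0) (hsub : Submodular z) (hc : Compatible z P) :
    Phi z P = EGP (zP z P) := by
  ext x
  constructor
  · rintro ⟨⟨hsumI, hineq⟩, htight⟩
    refine ⟨by rw [hsumI, ← zP_univ hz0 hc], ?_⟩
    intro E
    have key : ∀ C ∈ P.bubbles, ((∑ i ∈ E ∩ C, x i : ℝ) : WithTop ℝ) ≤ zConv z P C (E ∩ C) := by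
      intro C hC
      obtain ⟨a, rfl⟩ := (P.mem_bubbles).mp hC
      obtain ⟨raa, hraa⟩ := compat_fin hc (P.isDownset_strict a)
      have hta : (∑ i ∈ P.downClosure (P.bubble a) \ P.bubble a, x i : ℝ) = raa := by
        have h := htight _ (P.isDownset_strict a)
        rw [hraa] at h
        exact_mod_cast h
      have hdisj : Disjoint (P.downClosure (P.bubble a) \ P.bubble a) (E ∩ P.bubble a) :=
        Finset.disjoint_of_subset_right Finset.inter_subset_right Finset.sdiff_disjoint
      have hsum : (∑ i ∈ (P.downClosure (P.bubble a) \ P.bubble a) ∪ (E ∩ P.bubble a), x i)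
          = raa + ∑ i ∈ E ∩ P.bubble a, x i := by
        rw [Finset.sum_union hdisj, hta]
      have hle := hineq ((P.downClosure (P.bubble a) \ P.bubble a) ∪ (E ∩ P.bubble a))
      rw [hsum] at hle
      rw [zConv_repr hraa]
      calc ((∑ i ∈ E ∩ P.bubble a, x i : ℝ) : WithTop ℝ)
          = ↑(raa + ∑ i ∈ E ∩ P.bubble a, x i) + ↑(-raa) := by
            rw [← WithTop.coe_add]
            norm_num
        _ ≤ z ((P.downClosure (P.bubble a) \ P.bubble a) ∪ (E ∩ P.bubble a)) + ↑(-raa) :=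
            add_le_add_left hle _
    calc ((∑ i ∈ E, x i : ℝ) : WithTop ℝ)
        = ∑ C ∈ P.bubbles, ((∑ i ∈ E ∩ C, x i : ℝ) : WithTop ℝ) := by
          rw [← sum_over_bubbles P x E]
          push_cast
          rfl
      _ ≤ ∑ C ∈ P.bubbles, zConv z P C (E ∩ C) := Finset.sum_le_sum key
      _ = zP z P E := rfl
  · rintro ⟨hsumI, hineq⟩
    have hIe : zP z P Finset.univ = z Finset.univ := zP_univ hz0 hc
    refine ⟨⟨by rw [hsumI, hIe], fun A => le_trans (hineq A) (zP_le_z hz0 hsub hc A)⟩, ?_⟩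
    intro A hA
    obtain ⟨rA, hrA⟩ := compat_fin hc hA
    obtain ⟨rI, hrI⟩ := compat_fin hc isDownset_univ
    have hzPA : zP z P A = ↑rA := by rw [zP_downset hz0 hc A hA]; exact hrA
    have hzPI : zP z P Finset.univ = ↑rI := by rw [hIe]; exact hrI
    have hmodP : zP z P A + zP z P (Finset.univ \ A) = zP z P Finset.univ := by
      show (∑ C ∈ P.bubbles, zConv z P C (A ∩ C))
          + (∑ C ∈ P.bubbles, zConv z P C ((Finset.univ \ A) ∩ C))
          = ∑ C ∈ P.bubbles, zConv z P C (Finset.univ ∩ C)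
      rw [← Finset.sum_add_distrib]
      refine Finset.sum_congr rfl ?_
      intro C hC
      have h3 : Finset.univ ∩ C = C := Finset.univ_inter C
      rcases P.downset_inter_bubble hA hC with hemp | hsubA
      · have h2 : (Finset.univ \ A) ∩ C = C := by
          ext t
          have h4 : t ∈ A → t ∈ C → False := fun ht htc => by
            have : t ∈ A ∩ C := Finset.mem_inter.mpr ⟨ht, htc⟩
            rw [hemp] at this
            exact absurd this (Finset.notMem_empty t)
          simp only [Finset.mem_inter, Finset.mem_sdiff, Finset.mem_univ, true_and]
          tauto
        rw [hemp, h2, h3, zConv_empty hc hC, zero_add]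
      · have h1 : A ∩ C = C := Finset.inter_eq_right.mpr hsubA
        have h2 : (Finset.univ \ A) ∩ C = ∅ := by
          ext t
          have h4 : t ∈ C → t ∈ A := fun ht => hsubA ht
          simp only [Finset.mem_inter, Finset.mem_sdiff, Finset.mem_univ, true_and,
            Finset.notMem_empty, iff_false]
          tauto
        rw [h1, h2, h3, zConv_empty hc hC, add_zero]
    have hcompl : zP z P (Finset.univ \ A) = ↑(rI - rA) := by
      rw [hzPA, hzPI] at hmodP
      by_cases htop : zP z P (Finset.univ \ A) = ⊤
      · rw [htop, WithTop.add_top] at hmodP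
        exact absurd hmodP (by simp)
      · obtain ⟨w, hw⟩ := wt_ex htop
        rw [hw] at hmodP ⊢
        have h5 : rA + w = rI := by exact_mod_cast hmodP
        have : w = rI - rA := by linarith
        rw [this]
    have h1 := hineq A
    rw [hzPA] at h1
    have h2 := hineq (Finset.univ \ A)
    rw [hcompl] at h2
    have r1 : (∑ i ∈ A, x i) ≤ rA := by exact_mod_cast h1
    have r2 : (∑ i ∈ Finset.univ \ A, x i) ≤ rI - rA := by exact_mod_cast h2
    have hsplitsum : (∑ i ∈ A, x i) + (∑ i ∈ Finset.univ \ A, x i) = rI := by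
      have hs : (∑ i ∈ Finset.univ, x i : ℝ) = rI := by
        rw [hzPI] at hsumI
        exact_mod_cast hsumI
      rw [← hs, ← Finset.sum_union (Finset.disjoint_sdiff),
        Finset.union_sdiff_of_subset (Finset.subset_univ A)]
    have : (∑ i ∈ A, x i) = rA := by linarith
    rw [hrA]
    exact_mod_cast this

lemma phi_nonempty_to_compatible (hsub : Submodular z) (hne : (Phi z P).Nonempty) :
    Compatible z P := by
  obtain ⟨x, hx⟩ := hne
  constructor
  · intro A hA
    exact phi_zfin hx hA
  · intro A B hA hB hAB C₁ C₂ hd hun hnorel U hU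
    have hpt : ∀ t : I, (t ∈ C₁ ∨ t ∈ C₂) ↔ (t ∈ B ∧ t ∉ A) := by
      intro t
      rw [← Finset.mem_union, hun, Finset.mem_sdiff]
    have hABt : ∀ t : I, t ∈ A → t ∈ B := fun t ht => hAB ht
    have hAC1 : P.IsDownset (A ∪ C₁) := by
      intro u y hy huy
      rcases Finset.mem_union.mp hy with hyA | hyC1
      · exact Finset.mem_union_left _ (hA hyA huy)
      · have hyB : y ∈ B := ((hpt y).mp (Or.inl hyC1)).1
        have huB : u ∈ B := hB hyB huy
        by_cases huA : u ∈ A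
        · exact Finset.mem_union_left _ huA
        · rcases (hpt u).mpr ⟨huB, huA⟩ with h | h
          · exact Finset.mem_union_right _ h
          · exact absurd huy (hnorel y hyC1 u h).2
    have hAC2 : P.IsDownset (A ∪ C₂) := by
      intro u y hy huy
      rcases Finset.mem_union.mp hy with hyA | hyC2
      · exact Finset.mem_union_left _ (hA hyA huy)
      · have hyB : y ∈ B := ((hpt y).mp (Or.inr hyC2)).1
        have huB : u ∈ B := hB hyB huy
        by_cases huA : u ∈ A
        · exact Finset.mem_union_left _ huA
        · rcases (hpt u).mpr ⟨huB, huA⟩ with h | h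
          · exact absurd huy (hnorel u h y hyC2).1
          · exact Finset.mem_union_right _ h
    obtain ⟨rA, hrA⟩ := wt_ex (phi_zfin hx hA)
    obtain ⟨rB, hrB⟩ := wt_ex (phi_zfin hx hB)
    obtain ⟨r1, hr1⟩ := wt_ex (phi_zfin hx hAC1)
    obtain ⟨r2, hr2⟩ := wt_ex (phi_zfin hx hAC2)
    have txA : (∑ i ∈ A, x i : ℝ) = rA := by
      have h := hx.2 A hA; rw [hrA] at h; exact_mod_cast h
    have txB : (∑ i ∈ B, x i : ℝ) = rB := by
      have h := hx.2 B hB; rw [hrB] at h; exact_mod_cast h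
    have tx1 : (∑ i ∈ A ∪ C₁, x i : ℝ) = r1 := by
      have h := hx.2 _ hAC1; rw [hr1] at h; exact_mod_cast h
    have tx2 : (∑ i ∈ A ∪ C₂, x i : ℝ) = r2 := by
      have h := hx.2 _ hAC2; rw [hr2] at h; exact_mod_cast h
    have hdA1 : Disjoint A C₁ := by
      rw [Finset.disjoint_left]
      intro t htA htC1
      exact ((hpt t).mp (Or.inl htC1)).2 htA
    have hdA2 : Disjoint A C₂ := by
      rw [Finset.disjoint_left]
      intro t htA htC2
      exact ((hpt t).mp (Or.inr htC2)).2 htA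
    have hBeq : A ∪ C₁ ∪ C₂ = B := by
      ext t
      have := hpt t
      have := hABt t
      simp only [Finset.mem_union]
      tauto
    have hsum1 : (∑ i ∈ A ∪ C₁, x i : ℝ) = (∑ i ∈ A, x i) + (∑ i ∈ C₁, x i) :=
      Finset.sum_union hdA1
    have hsum2 : (∑ i ∈ A ∪ C₂, x i : ℝ) = (∑ i ∈ A, x i) + (∑ i ∈ C₂, x i) :=
      Finset.sum_union hdA2
    have hsumB : (∑ i ∈ B, x i : ℝ) = (∑ i ∈ A ∪ C₁, x i) + (∑ i ∈ C₂, x i) := by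
      rw [← hBeq]
      exact Finset.sum_union (by
        rw [Finset.disjoint_left]
        intro t ht htC2
        rcases Finset.mem_union.mp ht with h | h
        · exact ((hpt t).mp (Or.inr htC2)).2 h
        · exact Finset.disjoint_left.mp hd h htC2)
    have hmod : r1 + r2 = rA + rB := by
      rw [← txA, ← txB, ← tx1, ← tx2]
      rw [hsum2, hsumB, hsum1]
      ring
    have hUsub : U ⊆ C₁ ∪ C₂ := by
      rw [hun]
      exact hU
    have hBeq' : z (A ∪ C₁ ∪ C₂) = ↑rB := by rw [hBeq]; exact hrB
    exact coRes_split_of_eq hrA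
      (additivity_of_modular hsub hd hrA hBeq' hr1 hr2 hmod hUsub)

end Chunk5
section Chunk6

variable {I : Type*} [Fintype I] [DecidableEq I]

open Finset

def RSubmod (g : Finset I → ℝ) : Prop :=
  ∀ S T : Finset I, g (S ∪ T) + g (S ∩ T) ≤ g S + g T

lemma greedy_exists {g : Finset I → ℝ} (hg : RSubmod g) (hg0 : g ∅ = 0) :
    ∀ D : Finset I, ∃ x : I → ℝ, (∀ i, i ∉ D → x i = 0) ∧ (∑ i ∈ D, x i = g D)
      ∧ (∀ S, S ⊆ D → ∑ i ∈ S, x i ≤ g S) := by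
  intro D
  induction D using Finset.strongInduction with
  | _ D ih =>
    rcases Finset.eq_empty_or_nonempty D with rfl | hne
    · refine ⟨fun _ => 0, fun i _ => rfl, by simp [hg0], ?_⟩
      intro S hS
      rw [Finset.subset_empty.mp hS]
      simp [hg0]
    · obtain ⟨a, ha⟩ := hne
      obtain ⟨x', hx'0, hx'sum, hx'le⟩ := ih (D.erase a) (Finset.erase_ssubset ha)
      refine ⟨Function.update x' a (g D - g (D.erase a)), ?_, ?_, ?_⟩
      · intro i hi
        have hia : i ≠ a := fun h => hi (by rw [h]; exact ha)
        rw [Function.update_of_ne hia]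
        exact hx'0 i (fun hmem => hi (Finset.mem_of_mem_erase hmem))
      · rw [← Finset.add_sum_erase _ _ ha, Function.update_self]
        have : ∑ i ∈ D.erase a, Function.update x' a (g D - g (D.erase a)) i
            = ∑ i ∈ D.erase a, x' i := by
          refine Finset.sum_congr rfl ?_
          intro i hi
          rw [Function.update_of_ne (Finset.ne_of_mem_erase hi)]
        rw [this, hx'sum]
        ring
      · intro S hS
        by_cases haS : a ∈ S
        · rw [← Finset.add_sum_erase _ _ haS, Function.update_self]
          have he : ∑ i ∈ S.erase a, Function.update x' a (g D - g (D.erase a)) i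
              = ∑ i ∈ S.erase a, x' i := by
            refine Finset.sum_congr rfl ?_
            intro i hi
            rw [Function.update_of_ne (Finset.ne_of_mem_erase hi)]
          rw [he]
          have h1 : ∑ i ∈ S.erase a, x' i ≤ g (S.erase a) :=
            hx'le _ (fun i hi => Finset.mem_erase.mpr
              ⟨(Finset.mem_erase.mp hi).1, hS (Finset.mem_erase.mp hi).2⟩)
          have h2 := hg S (D.erase a)
          have e1 : S ∪ D.erase a = D := by
            ext t
            constructor
            · intro ht
              rcases Finset.mem_union.mp ht with h | h
              · exact hS h
              · exact Finset.mem_of_mem_erase h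
            · intro ht
              by_cases hta : t = a
              · exact Finset.mem_union_left _ (hta ▸ haS)
              · exact Finset.mem_union_right _ (Finset.mem_erase.mpr ⟨hta, ht⟩)
          have e2 : S ∩ D.erase a = S.erase a := by
            ext t
            simp only [Finset.mem_inter, Finset.mem_erase]
            constructor
            · rintro ⟨h1', h2', -⟩
              exact ⟨h2', h1'⟩
            · rintro ⟨h1', h2'⟩
              exact ⟨h2', h1', hS h2'⟩
          rw [e1, e2] at h2
          linarith
        · have he : ∑ i ∈ S, Function.update x' a (g D - g (D.erase a)) i
              = ∑ i ∈ S, x' i := by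
            refine Finset.sum_congr rfl ?_
            intro i hi
            rw [Function.update_of_ne (fun h => haS (by rw [← h]; exact hi))]
          rw [he]
          exact hx'le S (fun i hi => Finset.mem_erase.mpr ⟨fun h => haS (by rw [← h]; exact hi), hS hi⟩)

lemma greedy_prefix {g : Finset I → ℝ} (hg : RSubmod g) (hg0 : g ∅ = 0) (T₀ : Finset I) :
    ∃ x : I → ℝ, (∑ i, x i = g Finset.univ) ∧ (∀ S : Finset I, ∑ i ∈ S, x i ≤ g S)
      ∧ (∑ i ∈ T₀, x i = g T₀) := by
  obtain ⟨y, hy0, hysum, hyle⟩ := greedy_exists hg hg0 T₀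
  set g' : Finset I → ℝ := fun S => g (S ∪ T₀) - g T₀ with hg'def
  have hg' : RSubmod g' := by
    intro S T
    have h := hg (S ∪ T₀) (T ∪ T₀)
    have e1 : (S ∪ T₀) ∪ (T ∪ T₀) = (S ∪ T) ∪ T₀ := by
      ext t; simp only [Finset.mem_union]; tauto
    have e2 : (S ∪ T₀) ∩ (T ∪ T₀) = (S ∩ T) ∪ T₀ := by
      ext t; simp only [Finset.mem_union, Finset.mem_inter]; tauto
    rw [e1, e2] at h
    simp only [hg'def]
    linarith
  have hg'0 : g' ∅ = 0 := by
    simp only [hg'def, Finset.empty_union, sub_self]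
  obtain ⟨y', hy'0, hy'sum, hy'le⟩ := greedy_exists hg' hg'0 (Finset.univ \ T₀)
  refine ⟨y + y', ?_, ?_, ?_⟩
  · have h1 : ∑ i ∈ Finset.univ, y i = g T₀ := by
      rw [← hysum]
      exact (Finset.sum_subset (Finset.subset_univ T₀) (fun i _ hi => hy0 i hi)).symm
    have h2 : ∑ i ∈ Finset.univ, y' i = g Finset.univ - g T₀ := by
      have := hy'sum
      rw [hg'def] at this
      simp only at this
      rw [Finset.sdiff_union_self_eq_union, Finset.union_eq_left.mpr (Finset.subset_univ T₀)] at this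
      rw [← this]
      exact (Finset.sum_subset (Finset.subset_univ _) (fun i _ hi => hy'0 i hi)).symm
    simp only [Pi.add_apply, Finset.sum_add_distrib]
    rw [h1, h2]
    ring
  · intro S
    simp only [Pi.add_apply, Finset.sum_add_distrib]
    have h1 : ∑ i ∈ S, y i = ∑ i ∈ S ∩ T₀, y i := by
      refine (Finset.sum_subset Finset.inter_subset_left ?_).symm
      intro i hi hni
      exact hy0 i (fun hT => hni (Finset.mem_inter.mpr ⟨hi, hT⟩))
    have h2 : ∑ i ∈ S, y' i = ∑ i ∈ S \ T₀, y' i := by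
      refine (Finset.sum_subset Finset.sdiff_subset ?_).symm
      intro i hi hni
      refine hy'0 i ?_
      intro hmem
      rw [Finset.mem_sdiff] at hmem
      exact hni (Finset.mem_sdiff.mpr ⟨hi, hmem.2⟩)
    rw [h1, h2]
    have h3 : ∑ i ∈ S ∩ T₀, y i ≤ g (S ∩ T₀) := hyle _ Finset.inter_subset_right
    have h4 : ∑ i ∈ S \ T₀, y' i ≤ g' (S \ T₀) := by
      refine hy'le _ ?_
      intro i hi
      rw [Finset.mem_sdiff] at hi
      exact Finset.mem_sdiff.mpr ⟨Finset.mem_univ i, hi.2⟩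
    have h5 : g' (S \ T₀) = g (S ∪ T₀) - g T₀ := by
      rw [hg'def]
      simp only
      congr 2
      ext t
      simp only [Finset.mem_union, Finset.mem_sdiff]
      tauto
    have h6 := hg S T₀
    linarith
  · simp only [Pi.add_apply, Finset.sum_add_distrib]
    have h1 : ∑ i ∈ T₀, y' i = 0 := by
      refine Finset.sum_eq_zero ?_
      intro i hi
      exact hy'0 i (fun hmem => (Finset.mem_sdiff.mp hmem).2 hi)
    rw [hysum, h1]
    ring

/-- sum of absolute values of the finite parts of `w`. -/
noncomputable def sAbs (w : Finset I → WithTop ℝ) : ℝ :=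
  ∑ B ∈ (Finset.univ : Finset I).powerset, |(w B).untopD 0|

lemma sAbs_nonneg (w : Finset I → WithTop ℝ) : 0 ≤ sAbs w :=
  Finset.sum_nonneg (fun B _ => abs_nonneg _)

lemma abs_le_sAbs (w : Finset I → WithTop ℝ) (B : Finset I) :
    |(w B).untopD 0| ≤ sAbs w :=
  Finset.single_le_sum (f := fun B => |(w B).untopD 0|) (fun _ _ => abs_nonneg _)
    (Finset.mem_powerset.mpr (Finset.subset_univ B))

noncomputable def cands (w : Finset I → WithTop ℝ) (T : Finset I) : Finset (Finset I) :=
  (Finset.univ : Finset I).powerset.filter (fun B => T ⊆ B ∧ w B ≠ ⊤)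

noncomputable def trunc (w : Finset I → WithTop ℝ) (T : Finset I) : ℝ :=
  if h : (cands w T).Nonempty then
    (cands w T).inf' h (fun B => (w B).untopD 0 + (1 + 4 * sAbs w) * (B \ T).card)
  else 0

lemma cands_nonempty {w : Finset I → WithTop ℝ} (hw : w Finset.univ ≠ ⊤) (T : Finset I) :
    (cands w T).Nonempty :=
  ⟨Finset.univ, Finset.mem_filter.mpr
    ⟨Finset.mem_powerset.mpr (Finset.Subset.refl _), Finset.subset_univ T, hw⟩⟩

lemma trunc_le_cand {w : Finset I → WithTop ℝ} (hw : w Finset.univ ≠ ⊤) {T B : Finset I}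
    (hTB : T ⊆ B) (hB : w B ≠ ⊤) :
    trunc w T ≤ (w B).untopD 0 + (1 + 4 * sAbs w) * (B \ T).card := by
  rw [trunc, dif_pos (cands_nonempty hw T)]
  exact Finset.inf'_le _ (Finset.mem_filter.mpr
    ⟨Finset.mem_powerset.mpr (Finset.subset_univ B), hTB, hB⟩)

lemma trunc_exists {w : Finset I → WithTop ℝ} (hw : w Finset.univ ≠ ⊤) (T : Finset I) :
    ∃ B, T ⊆ B ∧ w B ≠ ⊤ ∧
      trunc w T = (w B).untopD 0 + (1 + 4 * sAbs w) * (B \ T).card := by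
  rw [trunc, dif_pos (cands_nonempty hw T)]
  obtain ⟨B, hB, hEq⟩ := Finset.exists_mem_eq_inf' (cands_nonempty hw T)
    (fun B => (w B).untopD 0 + (1 + 4 * sAbs w) * ((B \ T).card : ℝ))
  rw [cands, Finset.mem_filter] at hB
  exact ⟨B, hB.2.1, hB.2.2, hEq⟩

lemma trunc_le_untop' {w : Finset I → WithTop ℝ} (hw : w Finset.univ ≠ ⊤) {T : Finset I}
    (hT : w T ≠ ⊤) : trunc w T ≤ (w T).untopD 0 := by
  have h := trunc_le_cand hw (Finset.Subset.refl T) hT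
  rw [Finset.sdiff_self] at h
  simpa using h

lemma trunc_coe_le {w : Finset I → WithTop ℝ} (hw : w Finset.univ ≠ ⊤) (T : Finset I) :
    ((trunc w T : ℝ) : WithTop ℝ) ≤ w T := by
  by_cases hT : w T = ⊤
  · rw [hT]; exact le_top
  · obtain ⟨r, hr⟩ := wt_ex hT
    rw [hr]
    rw [WithTop.coe_le_coe]
    have := trunc_le_untop' hw hT
    rwa [hr] at this

lemma cand_val_nonneg {w : Finset I → WithTop ℝ} {B : Finset I} (hB : B.Nonempty) :
    0 ≤ (w B).untopD 0 + (1 + 4 * sAbs w) * ((B \ ∅).card : ℝ) := by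
  have h1 : -(sAbs w) ≤ (w B).untopD 0 := by
    have := abs_le_sAbs w B
    have := abs_nonneg ((w B).untopD 0)
    have := neg_abs_le ((w B).untopD 0)
    linarith
  have h2 : (1 : ℝ) ≤ ((B \ ∅).card : ℝ) := by
    rw [Finset.sdiff_empty]
    have : 1 ≤ B.card := Finset.card_pos.mpr hB
    exact_mod_cast this
  have h3 : 0 ≤ sAbs w := sAbs_nonneg w
  nlinarith

lemma trunc_empty {w : Finset I → WithTop ℝ} (hw : w Finset.univ ≠ ⊤) (hw0 : w ∅ = 0) :
    trunc w ∅ = 0 := by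
  have hne : w ∅ ≠ ⊤ := by rw [hw0]; exact (by norm_num)
  have hle : trunc w ∅ ≤ 0 := by
    have := trunc_le_untop' hw hne
    rw [hw0] at this
    simpa using this
  have hge : 0 ≤ trunc w ∅ := by
    rw [trunc, dif_pos (cands_nonempty hw ∅)]
    rw [Finset.le_inf'_iff]
    intro B hB
    rw [cands, Finset.mem_filter] at hB
    rcases Finset.eq_empty_or_nonempty B with rfl | hBne
    · simp [hw0]
    · exact cand_val_nonneg hBne
  linarith

lemma trunc_univ {w : Finset I → WithTop ℝ} (hw : w Finset.univ ≠ ⊤) :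
    trunc w Finset.univ = (w Finset.univ).untopD 0 := by
  have hle : trunc w Finset.univ ≤ (w Finset.univ).untopD 0 := trunc_le_untop' hw hw
  obtain ⟨B, hTB, hB, hEq⟩ := trunc_exists hw Finset.univ
  have hBu : B = Finset.univ := Finset.univ_subset_iff.mp hTB
  rw [hBu] at hEq
  rw [Finset.sdiff_self] at hEq
  simp at hEq
  linarith [le_of_eq hEq]

lemma card_sdiff_ineq (B₁ B₂ S T : Finset I) :
    ((B₁ ∪ B₂) \ (S ∪ T)).card + ((B₁ ∩ B₂) \ (S ∩ T)).card
      ≤ (B₁ \ S).card + (B₂ \ T).card := by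
  have hsub1 : ((B₁ ∪ B₂) \ (S ∪ T)) ∪ ((B₁ ∩ B₂) \ (S ∩ T)) ⊆ (B₁ \ S) ∪ (B₂ \ T) := by
    intro t ht
    rcases Finset.mem_union.mp ht with h | h
    · rw [Finset.mem_sdiff, Finset.mem_union, Finset.mem_union] at h
      push_neg at h
      rcases h.1 with h1 | h1
      · exact Finset.mem_union_left _ (Finset.mem_sdiff.mpr ⟨h1, h.2.1⟩)
      · exact Finset.mem_union_right _ (Finset.mem_sdiff.mpr ⟨h1, h.2.2⟩)
    · rw [Finset.mem_sdiff, Finset.mem_inter, Finset.mem_inter] at h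
      by_cases hs : t ∈ S
      · have : t ∉ T := fun hT => h.2 ⟨hs, hT⟩
        exact Finset.mem_union_right _ (Finset.mem_sdiff.mpr ⟨h.1.2, this⟩)
      · exact Finset.mem_union_left _ (Finset.mem_sdiff.mpr ⟨h.1.1, hs⟩)
  have hsub2 : ((B₁ ∪ B₂) \ (S ∪ T)) ∩ ((B₁ ∩ B₂) \ (S ∩ T)) ⊆ (B₁ \ S) ∩ (B₂ \ T) := by
    intro t ht
    rw [Finset.mem_inter, Finset.mem_sdiff, Finset.mem_sdiff, Finset.mem_union,
      Finset.mem_union, Finset.mem_inter] at ht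
    push_neg at ht
    rw [Finset.mem_inter, Finset.mem_sdiff, Finset.mem_sdiff]
    exact ⟨⟨ht.2.1.1, ht.1.2.1⟩, ht.2.1.2, ht.1.2.2⟩
  calc ((B₁ ∪ B₂) \ (S ∪ T)).card + ((B₁ ∩ B₂) \ (S ∩ T)).card
      = (((B₁ ∪ B₂) \ (S ∪ T)) ∪ ((B₁ ∩ B₂) \ (S ∩ T))).card
        + (((B₁ ∪ B₂) \ (S ∪ T)) ∩ ((B₁ ∩ B₂) \ (S ∩ T))).card :=
        (Finset.card_union_add_card_inter _ _).symm
    _ ≤ ((B₁ \ S) ∪ (B₂ \ T)).card + ((B₁ \ S) ∩ (B₂ \ T)).card :=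
        Nat.add_le_add (Finset.card_le_card hsub1) (Finset.card_le_card hsub2)
    _ = (B₁ \ S).card + (B₂ \ T).card := Finset.card_union_add_card_inter _ _

lemma untop'_add_le {a b c d : WithTop ℝ} (ha : a ≠ ⊤) (hb : b ≠ ⊤) (hc : c ≠ ⊤) (hd : d ≠ ⊤)
    (h : a + b ≤ c + d) : (a.untopD 0) + (b.untopD 0) ≤ (c.untopD 0) + (d.untopD 0) := by
  obtain ⟨ra, hra⟩ := wt_ex ha
  obtain ⟨rb, hrb⟩ := wt_ex hb
  obtain ⟨rc, hrc⟩ := wt_ex hc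
  obtain ⟨rd, hrd⟩ := wt_ex hd
  rw [hra, hrb, hrc, hrd] at h ⊢
  exact_mod_cast h

lemma trunc_submod {w : Finset I → WithTop ℝ} (hsubw : Submodular w)
    (hw : w Finset.univ ≠ ⊤) : RSubmod (trunc w) := by
  intro S T
  obtain ⟨B₁, hTB₁, hB₁, hEq₁⟩ := trunc_exists hw S
  obtain ⟨B₂, hTB₂, hB₂, hEq₂⟩ := trunc_exists hw T
  have hfin := submod_ne_top hsubw hB₁ hB₂
  have h1 : trunc w (S ∪ T) ≤ (w (B₁ ∪ B₂)).untopD 0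
      + (1 + 4 * sAbs w) * (((B₁ ∪ B₂) \ (S ∪ T)).card : ℝ) :=
    trunc_le_cand hw (Finset.union_subset_union hTB₁ hTB₂) hfin.1
  have h2 : trunc w (S ∩ T) ≤ (w (B₁ ∩ B₂)).untopD 0
      + (1 + 4 * sAbs w) * (((B₁ ∩ B₂) \ (S ∩ T)).card : ℝ) :=
    trunc_le_cand hw (Finset.inter_subset_inter hTB₁ hTB₂) hfin.2
  have h3 : (w (B₁ ∪ B₂)).untopD 0 + (w (B₁ ∩ B₂)).untopD 0
      ≤ (w B₁).untopD 0 + (w B₂).untopD 0 :=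
    untop'_add_le hfin.1 hfin.2 hB₁ hB₂ (hsubw B₁ B₂)
  have h4 : (((B₁ ∪ B₂) \ (S ∪ T)).card : ℝ) + (((B₁ ∩ B₂) \ (S ∩ T)).card : ℝ)
      ≤ ((B₁ \ S).card : ℝ) + ((B₂ \ T).card : ℝ) := by
    exact_mod_cast card_sdiff_ineq B₁ B₂ S T
  have hM : (0:ℝ) ≤ 1 + 4 * sAbs w := by
    have := sAbs_nonneg w
    linarith
  rw [hEq₁, hEq₂]
  nlinarith

lemma trunc_eq_implies {w : Finset I → WithTop ℝ} (hw : w Finset.univ ≠ ⊤) {T : Finset I}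
    {v : ℝ} (hv : |v| ≤ 3 * sAbs w) (ht : trunc w T = v) : w T = ↑v := by
  obtain ⟨B, hTB, hB, hEq⟩ := trunc_exists hw T
  by_cases hBT : B = T
  · rw [hBT] at hEq
    rw [Finset.sdiff_self] at hEq
    simp at hEq
    obtain ⟨r, hr⟩ := wt_ex (hBT ▸ hB)
    rw [hr]
    rw [hr] at hEq
    have : r = v := by
      rw [ht] at hEq
      simpa using hEq.symm
    rw [this]
  · exfalso
    have hne : (B \ T).Nonempty := by
      rw [Finset.sdiff_nonempty]
      intro hsub
      exact hBT (Finset.Subset.antisymm hsub hTB)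
    have hcard : (1 : ℝ) ≤ ((B \ T).card : ℝ) := by
      have := Finset.card_pos.mpr hne
      exact_mod_cast this
    have habs : -(sAbs w) ≤ (w B).untopD 0 := by
      have := abs_le_sAbs w B
      have := neg_abs_le ((w B).untopD 0)
      linarith
    have hMnn : (0:ℝ) ≤ sAbs w := sAbs_nonneg w
    have hlb : 1 + 3 * sAbs w ≤ trunc w T := by
      rw [hEq]
      nlinarith
    rw [ht] at hlb
    have : v ≤ |v| := le_abs_self v
    linarith

lemma EGP_exists_tight {w : Finset I → WithTop ℝ} (hsubw : Submodular w) (hw0 : w ∅ = 0)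
    (hw : w Finset.univ ≠ ⊤) (T₀ : Finset I) :
    ∃ x ∈ EGP w, (∑ i ∈ T₀, x i : ℝ) = trunc w T₀ := by
  obtain ⟨x, hxsum, hxle, hxT⟩ := greedy_prefix (trunc_submod hsubw hw) (trunc_empty hw hw0) T₀
  refine ⟨x, ⟨?_, ?_⟩, hxT⟩
  · rw [hxsum, trunc_univ hw]
    obtain ⟨r, hr⟩ := wt_ex hw
    rw [hr]
    norm_num
  · intro A
    calc ((∑ i ∈ A, x i : ℝ) : WithTop ℝ) ≤ ((trunc w A : ℝ) : WithTop ℝ) := by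
          exact_mod_cast hxle A
      _ ≤ w A := trunc_coe_le hw A

end Chunk6
section Chunk7

variable {I : Type*} [Fintype I] [DecidableEq I] {z : Finset I → WithTop ℝ} {P : Preo I}

open Finset

lemma compatible_to_phi_nonempty (hz0 : z ∅ = 0) (hzI : z Finset.univ ≠ ⊤)
    (hsub : Submodular z) (hc : Compatible z P) : (Phi z P).Nonempty := by
  rw [phi_eq_EGP hz0 hsub hc]
  have h1 : zP z P ∅ = 0 := zP_empty hz0 hc
  have h2 : zP z P Finset.univ ≠ ⊤ := by rw [zP_univ hz0 hc]; exact hzI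
  obtain ⟨x, hx, -⟩ := EGP_exists_tight (zP_submodular hsub) h1 h2 ∅
  exact ⟨x, hx⟩

lemma wt_add_neg_cancel (a : WithTop ℝ) (r : ℝ) : a + ↑(-r) + (↑r : WithTop ℝ) = a := by
  cases a with
  | top => simp [WithTop.top_add]
  | coe b =>
    rw [← WithTop.coe_add, ← WithTop.coe_add]
    norm_num

lemma EGP_forced_lattice {w : Finset I → WithTop ℝ} (hsubw : Submodular w)
    {X Y : Finset I} {rX rY : ℝ}
    (hwX : w X = ↑rX) (hwY : w Y = ↑rY)
    (hfX : ∀ x ∈ EGP w, (∑ k ∈ X, x k : ℝ) = rX)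
    (hfY : ∀ x ∈ EGP w, (∑ k ∈ Y, x k : ℝ) = rY)
    (hne : (EGP w).Nonempty) :
    ∃ rU rI : ℝ, w (X ∪ Y) = ↑rU ∧ w (X ∩ Y) = ↑rI ∧ rU + rI = rX + rY ∧
      (∀ x ∈ EGP w, (∑ k ∈ X ∪ Y, x k : ℝ) = rU) ∧
      (∀ x ∈ EGP w, (∑ k ∈ X ∩ Y, x k : ℝ) = rI) := by
  obtain ⟨x₀, hx₀⟩ := hne
  have hle : w (X ∪ Y) + w (X ∩ Y) ≤ ↑(rX + rY) := by
    have h := hsubw X Y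
    rwa [hwX, hwY, ← WithTop.coe_add] at h
  obtain ⟨hU, hI⟩ := wt_add_le_coe hle
  obtain ⟨ru, hru⟩ := wt_ex hU
  obtain ⟨rv, hrv⟩ := wt_ex hI
  have key : ∀ x ∈ EGP w, (∑ k ∈ X ∪ Y, x k : ℝ) = ru ∧ (∑ k ∈ X ∩ Y, x k : ℝ) = rv := by
    intro x hx
    have h1 : (∑ k ∈ X ∪ Y, x k : ℝ) ≤ ru := by
      have := hx.2 (X ∪ Y)
      rw [hru] at this
      exact_mod_cast this
    have h2 : (∑ k ∈ X ∩ Y, x k : ℝ) ≤ rv := by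
      have := hx.2 (X ∩ Y)
      rw [hrv] at this
      exact_mod_cast this
    have h3 : (∑ k ∈ X ∪ Y, x k : ℝ) + (∑ k ∈ X ∩ Y, x k : ℝ) = rX + rY := by
      rw [Finset.sum_union_inter, hfX x hx, hfY x hx]
    have h4 : ru + rv ≤ rX + rY := by
      have := hle
      rw [hru, hrv, ← WithTop.coe_add] at this
      exact_mod_cast this
    constructor <;> linarith
  refine ⟨ru, rv, hru, hrv, ?_, fun x hx => (key x hx).1, fun x hx => (key x hx).2⟩
  have h0 := key x₀ hx₀
  have h3 : (∑ k ∈ X ∪ Y, x₀ k : ℝ) + (∑ k ∈ X ∩ Y, x₀ k : ℝ) = rX + rY := by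
    rw [Finset.sum_union_inter, hfX x₀ hx₀, hfY x₀ hx₀]
  rw [h0.1, h0.2] at h3
  exact h3

lemma zP_downset_union_sub (hz0 : z ∅ = 0) (hc : Compatible z P) {a : I} {V : Finset I}
    (hV : V ⊆ P.bubble a) :
    zP z P ((P.downClosure (P.bubble a) \ P.bubble a) ∪ V)
      = z ((P.downClosure (P.bubble a) \ P.bubble a) ∪ V) := by
  have hCbub : P.bubble a ∈ P.bubbles := (P.mem_bubbles).mpr ⟨a, rfl⟩
  obtain ⟨raa, hraa⟩ := compat_fin hc (P.isDownset_strict a)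
  have hsum : zP z P ((P.downClosure (P.bubble a) \ P.bubble a) ∪ V)
      = zConv z P (P.bubble a) (((P.downClosure (P.bubble a) \ P.bubble a) ∪ V) ∩ P.bubble a)
      + ∑ C' ∈ P.bubbles.erase (P.bubble a),
          zConv z P C' (((P.downClosure (P.bubble a) \ P.bubble a) ∪ V) ∩ C') :=
    (Finset.add_sum_erase _ _ hCbub).symm
  have hsumA : zP z P (P.downClosure (P.bubble a) \ P.bubble a)
      = zConv z P (P.bubble a) ((P.downClosure (P.bubble a) \ P.bubble a) ∩ P.bubble a)
      + ∑ C' ∈ P.bubbles.erase (P.bubble a),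
          zConv z P C' ((P.downClosure (P.bubble a) \ P.bubble a) ∩ C') :=
    (Finset.add_sum_erase _ _ hCbub).symm
  have hVt : ∀ t, t ∈ V → t ∈ P.bubble a := fun t ht => hV ht
  have e1 : ((P.downClosure (P.bubble a) \ P.bubble a) ∪ V) ∩ P.bubble a = V := by
    ext t
    have := hVt t
    simp only [Finset.mem_inter, Finset.mem_union, Finset.mem_sdiff]
    tauto
  have e2 : (P.downClosure (P.bubble a) \ P.bubble a) ∩ P.bubble a = ∅ := by
    ext t
    simp only [Finset.mem_inter, Finset.mem_sdiff, Finset.notMem_empty, iff_false]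
    tauto
  have e3 : ∀ C' ∈ P.bubbles.erase (P.bubble a),
      zConv z P C' (((P.downClosure (P.bubble a) \ P.bubble a) ∪ V) ∩ C')
        = zConv z P C' ((P.downClosure (P.bubble a) \ P.bubble a) ∩ C') := by
    intro C' hC'
    have hdisj : Disjoint C' (P.bubble a) :=
      P.bubbles_disjoint (Finset.mem_of_mem_erase hC') hCbub (Finset.ne_of_mem_erase hC')
    have : ((P.downClosure (P.bubble a) \ P.bubble a) ∪ V) ∩ C'
        = (P.downClosure (P.bubble a) \ P.bubble a) ∩ C' := by
      ext t
      have h1 : t ∈ C' → t ∉ P.bubble a := fun ht => Finset.disjoint_left.mp hdisj ht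
      have := hVt t
      simp only [Finset.mem_inter, Finset.mem_union, Finset.mem_sdiff]
      tauto
    rw [this]
  rw [hsum, e1, Finset.sum_congr rfl e3]
  have hA : zP z P (P.downClosure (P.bubble a) \ P.bubble a) = ↑raa := by
    rw [zP_downset hz0 hc _ (P.isDownset_strict a)]
    exact hraa
  rw [hsumA, e2, zConv_empty hc hCbub, zero_add] at hA
  rw [hA, zConv_repr hraa]
  rw [add_comm (z ((P.downClosure (P.bubble a) \ P.bubble a) ∪ V) + ↑(-raa)) (↑raa : WithTop ℝ)]
  rw [add_comm (z ((P.downClosure (P.bubble a) \ P.bubble a) ∪ V)) (↑(-raa) : WithTop ℝ),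
    ← add_assoc]
  rw [← WithTop.coe_add]
  norm_num

lemma bubble_convexF (P : Preo I) (a : I) : P.ConvexF (P.bubble a) := by
  intro x y u hx hy hxu huy
  rw [P.mem_bubble] at hx hy ⊢
  exact ⟨P.le_trans hx.1 hxu, P.le_trans huy hy.2⟩

set_option maxHeartbeats 2000000 in
lemma forced_separating_false (hz0 : z ∅ = 0) (hzI : z Finset.univ ≠ ⊤)
    (hsub : Submodular z) (hconf : Conforms z P)
    {X : Finset I} (hXfin : zP z P X ≠ ⊤)
    (hforced : ∀ x ∈ Phi z P, ((∑ k ∈ X, x k : ℝ) : WithTop ℝ) = zP z P X)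
    {i j : I} (hij : P.bubRel i j) (hiX : i ∈ X) (hjX : j ∉ X) : False := by
  have hc : Compatible z P := hconf.1
  have hPhiEGP : Phi z P = EGP (zP z P) := phi_eq_EGP hz0 hsub hc
  have hne : (Phi z P).Nonempty := compatible_to_phi_nonempty hz0 hzI hsub hc
  have hnew : (EGP (zP z P)).Nonempty := hPhiEGP ▸ hne
  have hwsub : Submodular (zP z P) := zP_submodular hsub
  have hw0 : zP z P ∅ = 0 := zP_empty hz0 hc
  have hwI : zP z P Finset.univ ≠ ⊤ := by rw [zP_univ hz0 hc]; exact hzI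
  -- notation
  have hAds := P.isDownset_strict i
  have hBds := P.isDownset_downClosure (P.bubble i)
  obtain ⟨rA, hrA⟩ := compat_fin hc hAds
  obtain ⟨rB, hrB⟩ := compat_fin hc hBds
  have hwA : zP z P (P.downClosure (P.bubble i) \ P.bubble i) = ↑rA := by
    rw [zP_downset hz0 hc _ hAds]; exact hrA
  have hwB : zP z P (P.downClosure (P.bubble i)) = ↑rB := by
    rw [zP_downset hz0 hc _ hBds]; exact hrB
  obtain ⟨rX, hrX⟩ := wt_ex hXfin
  -- forced as real sums
  have hfA : ∀ x ∈ EGP (zP z P), (∑ k ∈ P.downClosure (P.bubble i) \ P.bubble i, x k : ℝ) = rA := by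
    intro x hx
    rw [← hPhiEGP] at hx
    have h := hx.2 _ hAds
    rw [hrA] at h
    exact_mod_cast h
  have hfB : ∀ x ∈ EGP (zP z P), (∑ k ∈ P.downClosure (P.bubble i), x k : ℝ) = rB := by
    intro x hx
    rw [← hPhiEGP] at hx
    have h := hx.2 _ hBds
    rw [hrB] at h
    exact_mod_cast h
  have hfX : ∀ x ∈ EGP (zP z P), (∑ k ∈ X, x k : ℝ) = rX := by
    intro x hx
    have h := hforced x (by rw [hPhiEGP]; exact hx)
    rw [hrX] at h
    exact_mod_cast h
  -- lattice: X ∩ B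
  obtain ⟨rU1, rI1, hwU1, hwI1, hsum1, hfU1, hfI1⟩ :=
    EGP_forced_lattice hwsub hrX hwB hfX hfB hnew
  -- lattice : (X ∩ B) ∪ A
  obtain ⟨rU2, rI2, hwU2, hwI2, hsum2, hfU2, hfI2⟩ :=
    EGP_forced_lattice hwsub hwI1 hwA hfI1 hfA hnew
  -- D₁ := (X ∩ B) ∪ A = A ∪ (X ∩ C)
  have hBt : ∀ t : I, t ∈ P.downClosure (P.bubble i)
      ↔ t ∈ (P.downClosure (P.bubble i) \ P.bubble i) ∨ t ∈ P.bubble i := by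
    intro t
    constructor
    · intro ht
      by_cases h : t ∈ P.bubble i
      · exact Or.inr h
      · exact Or.inl (Finset.mem_sdiff.mpr ⟨ht, h⟩)
    · rintro (h | h)
      · exact (Finset.mem_sdiff.mp h).1
      · exact P.subset_downClosure _ h
  have hD1eq : (X ∩ P.downClosure (P.bubble i)) ∪ (P.downClosure (P.bubble i) \ P.bubble i)
      = (P.downClosure (P.bubble i) \ P.bubble i) ∪ (X ∩ P.bubble i) := by
    ext t
    have h1 := hBt t
    simp only [Finset.mem_union, Finset.mem_inter, Finset.mem_sdiff] at h1 ⊢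
    tauto
  -- forced value at D₂ := A ∪ (C \ X)
  have hD2eq : ∀ x : I → ℝ, (∑ k ∈ (P.downClosure (P.bubble i) \ P.bubble i) ∪ (P.bubble i \ X), x k : ℝ)
      = (∑ k ∈ P.downClosure (P.bubble i), x k)
        - (∑ k ∈ (X ∩ P.downClosure (P.bubble i)) ∪ (P.downClosure (P.bubble i) \ P.bubble i), x k)
        + (∑ k ∈ P.downClosure (P.bubble i) \ P.bubble i, x k) := by
    intro x
    have hsplit1 : (∑ k ∈ P.downClosure (P.bubble i), x k : ℝ)
        = (∑ k ∈ (P.downClosure (P.bubble i) \ P.bubble i) ∪ (P.bubble i \ X), x k)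
          + (∑ k ∈ X ∩ P.bubble i, x k) := by
      rw [← Finset.sum_union (by
        rw [Finset.disjoint_left]
        intro t ht htX
        rw [Finset.mem_inter] at htX
        rcases Finset.mem_union.mp ht with h | h
        · exact (Finset.mem_sdiff.mp h).2 htX.2
        · exact (Finset.mem_sdiff.mp h).2 htX.1)]
      congr 1
      ext t
      have h1 := hBt t
      simp only [Finset.mem_union, Finset.mem_inter, Finset.mem_sdiff] at h1 ⊢
      tauto
    have hsplit2 : (∑ k ∈ (X ∩ P.downClosure (P.bubble i)) ∪ (P.downClosure (P.bubble i) \ P.bubble i), x k : ℝ)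
        = (∑ k ∈ P.downClosure (P.bubble i) \ P.bubble i, x k) + (∑ k ∈ X ∩ P.bubble i, x k) := by
      rw [hD1eq]
      rw [Finset.sum_union (by
        rw [Finset.disjoint_left]
        intro t ht htX
        rw [Finset.mem_inter] at htX
        exact (Finset.mem_sdiff.mp ht).2 htX.2)]
    linarith [hsplit1, hsplit2]
  -- greedy point tight at D₂
  obtain ⟨x₀, hx₀, hx₀T⟩ := EGP_exists_tight hwsub hw0 hwI
    ((P.downClosure (P.bubble i) \ P.bubble i) ∪ (P.bubble i \ X))
  have hx₀v : (∑ k ∈ (P.downClosure (P.bubble i) \ P.bubble i) ∪ (P.bubble i \ X), x₀ k : ℝ)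
      = rB - rU2 + rA := by
    rw [hD2eq x₀, hfB x₀ hx₀, hfU2 x₀ hx₀, hfA x₀ hx₀]
  have htrunc : trunc (zP z P) ((P.downClosure (P.bubble i) \ P.bubble i) ∪ (P.bubble i \ X))
      = rB - rU2 + rA := by
    rw [← hx₀T, hx₀v]
  -- |v| bound
  have habs : |rB - rU2 + rA| ≤ 3 * sAbs (zP z P) := by
    have h1 : |rA| ≤ sAbs (zP z P) := by
      have := abs_le_sAbs (zP z P) (P.downClosure (P.bubble i) \ P.bubble i)
      rw [hwA] at this
      simpa using this
    have h2 : |rB| ≤ sAbs (zP z P) := by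
      have := abs_le_sAbs (zP z P) (P.downClosure (P.bubble i))
      rw [hwB] at this
      simpa using this
    have h3 : |rU2| ≤ sAbs (zP z P) := by
      have := abs_le_sAbs (zP z P) ((X ∩ P.downClosure (P.bubble i)) ∪ (P.downClosure (P.bubble i) \ P.bubble i))
      rw [hwU2] at this
      simpa using this
    calc |rB - rU2 + rA| ≤ |rB| + |rU2| + |rA| := by
          have := abs_add_le (rB - rU2) rA
          have := abs_sub (rB) (rU2)
          have h4 : |rB - rU2| ≤ |rB| + |rU2| := abs_sub rB rU2
          linarith [abs_add_le (rB - rU2) rA]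
      _ ≤ 3 * sAbs (zP z P) := by linarith
  have hwD2 : zP z P ((P.downClosure (P.bubble i) \ P.bubble i) ∪ (P.bubble i \ X))
      = ↑(rB - rU2 + rA) := trunc_eq_implies hwI habs htrunc
  -- translate to z values
  have hzD2 : z ((P.downClosure (P.bubble i) \ P.bubble i) ∪ (P.bubble i \ X))
      = ↑(rB - rU2 + rA) := by
    rw [← zP_downset_union_sub hz0 hc (Finset.sdiff_subset : P.bubble i \ X ⊆ P.bubble i)]
    exact hwD2
  have hzD1 : z ((P.downClosure (P.bubble i) \ P.bubble i) ∪ (X ∩ P.bubble i)) = ↑rU2 := by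
    rw [← zP_downset_union_sub hz0 hc (Finset.inter_subset_right : X ∩ P.bubble i ⊆ P.bubble i)]
    rw [← hD1eq]
    exact hwU2
  -- additivity of zConv along (X ∩ C, C \ X)
  have hdisjC : Disjoint (X ∩ P.bubble i) (P.bubble i \ X) := by
    rw [Finset.disjoint_left]
    intro t ht ht'
    exact (Finset.mem_sdiff.mp ht').2 (Finset.mem_inter.mp ht).1
  have hunionC : (X ∩ P.bubble i) ∪ (P.bubble i \ X) = P.bubble i := by
    ext t
    simp only [Finset.mem_union, Finset.mem_inter, Finset.mem_sdiff]
    tauto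
  have hBfull : z ((P.downClosure (P.bubble i) \ P.bubble i) ∪ (X ∩ P.bubble i) ∪ (P.bubble i \ X))
      = ↑rB := by
    have : (P.downClosure (P.bubble i) \ P.bubble i) ∪ (X ∩ P.bubble i) ∪ (P.bubble i \ X)
        = P.downClosure (P.bubble i) := by
      rw [Finset.union_assoc, hunionC, P.strict_union i]
    rw [this]
    exact hrB
  have hmod : rU2 + (rB - rU2 + rA) = rA + rB := by ring
  have hsplitAll : ∀ U ⊆ P.bubble i,
      zConv z P (P.bubble i) U
        = zConv z P (P.bubble i) (U ∩ (X ∩ P.bubble i))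
          + zConv z P (P.bubble i) (U ∩ (P.bubble i \ X)) := by
    intro U hU
    show coRes z (P.downClosure (P.bubble i) \ P.bubble i) U = _
    exact coRes_split_of_eq hrA
      (additivity_of_modular hsub hdisjC hrA hBfull hzD1 hzD2 hmod
        (by rw [hunionC]; exact hU))
  have hnorel := hconf.2 (P.bubble i) (bubble_convexF P i) (X ∩ P.bubble i) (P.bubble i \ X)
    hdisjC hunionC hsplitAll i (Finset.mem_inter.mpr ⟨hiX, P.self_mem_bubble i⟩)
    j (Finset.mem_sdiff.mpr ⟨(P.mem_bubble).mpr ⟨hij.1, hij.2⟩, hjX⟩)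
  exact hnorel.1 hij.1

end Chunk7
section Chunk8

variable {I : Type*} [Fintype I] [DecidableEq I] {z : Finset I → WithTop ℝ} {P : Preo I}

open Finset

lemma EGP_convex (w : Finset I → WithTop ℝ) : Convex ℝ (EGP w) := by
  rintro x hx y hy a b ha hb hab
  have hsum : ∀ S : Finset I, (∑ k ∈ S, (a • x + b • y) k : ℝ)
      = a * (∑ k ∈ S, x k) + b * (∑ k ∈ S, y k) := by
    intro S
    simp only [Pi.add_apply, Pi.smul_apply, smul_eq_mul]
    rw [Finset.sum_add_distrib, Finset.mul_sum, Finset.mul_sum]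
  constructor
  · obtain ⟨rI, hrI⟩ := wt_ex (show w Finset.univ ≠ ⊤ by
      rw [← hx.1]; exact WithTop.coe_ne_top)
    have hxI : (∑ k, x k : ℝ) = rI := by
      have := hx.1; rw [hrI] at this; exact_mod_cast this
    have hyI : (∑ k, y k : ℝ) = rI := by
      have := hy.1; rw [hrI] at this; exact_mod_cast this
    rw [hsum Finset.univ, hxI, hyI, hrI]
    have : a * rI + b * rI = rI := by
      have : (a + b) * rI = rI := by rw [hab, one_mul]
      linarith [this]
    exact_mod_cast this
  · intro S
    by_cases hS : w S = ⊤
    · rw [hS]; exact le_top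
    · obtain ⟨r, hr⟩ := wt_ex hS
      have h1 : (∑ k ∈ S, x k : ℝ) ≤ r := by
        have := hx.2 S; rw [hr] at this; exact_mod_cast this
      have h2 : (∑ k ∈ S, y k : ℝ) ≤ r := by
        have := hy.2 S; rw [hr] at this; exact_mod_cast this
      rw [hsum S, hr]
      have : a * (∑ k ∈ S, x k) + b * (∑ k ∈ S, y k) ≤ r := by
        have ha1 : a * (∑ k ∈ S, x k) ≤ a * r := mul_le_mul_of_nonneg_left h1 ha
        have hb1 : b * (∑ k ∈ S, y k) ≤ b * r := mul_le_mul_of_nonneg_left h2 hb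
        have : (a + b) * r = r := by rw [hab, one_mul]
        nlinarith
      exact_mod_cast this

lemma phi_bubble_sum_const (hc : Compatible z P) {x y : I → ℝ}
    (hx : x ∈ Phi z P) (hy : y ∈ Phi z P) (a : I) :
    ∑ k ∈ P.bubble a, x k = ∑ k ∈ P.bubble a, y k := by
  obtain ⟨rA, hrA⟩ := compat_fin hc (P.isDownset_strict a)
  obtain ⟨rB, hrB⟩ := compat_fin hc (P.isDownset_downClosure (P.bubble a))
  have key : ∀ u : I → ℝ, u ∈ Phi z P → ∑ k ∈ P.bubble a, u k = rB - rA := by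
    intro u hu
    have h1 : (∑ k ∈ P.downClosure (P.bubble a) \ P.bubble a, u k : ℝ) = rA := by
      have := hu.2 _ (P.isDownset_strict a); rw [hrA] at this; exact_mod_cast this
    have h2 : (∑ k ∈ P.downClosure (P.bubble a), u k : ℝ) = rB := by
      have := hu.2 _ (P.isDownset_downClosure (P.bubble a)); rw [hrB] at this; exact_mod_cast this
    have h3 : (∑ k ∈ P.downClosure (P.bubble a), u k : ℝ)
        = (∑ k ∈ P.downClosure (P.bubble a) \ P.bubble a, u k) + ∑ k ∈ P.bubble a, u k := by
      rw [← Finset.sum_union (P.strict_disjoint a), P.strict_union a]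
    rw [h1, h2] at h3
    linarith
  rw [key x hx, key y hy]

noncomputable def bubSum (P : Preo I) : (I → ℝ) →ₗ[ℝ] ({ C // C ∈ P.bubbles } → ℝ) where
  toFun v := fun C => ∑ k ∈ (C : Finset I), v k
  map_add' u v := by
    funext C
    simp [Finset.sum_add_distrib]
  map_smul' c v := by
    funext C
    simp [Finset.mul_sum]

lemma bubSum_surj (P : Preo I) : Function.Surjective (bubSum (I := I) P) := by
  intro f
  have hrep : ∀ C : { C // C ∈ P.bubbles }, ∃ a : I, a ∈ (C : Finset I) := by
    intro C
    exact P.bubbles_nonempty C.2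
  choose rep hrepmem using hrep
  refine ⟨fun k => ∑ C ∈ (Finset.univ : Finset { C // C ∈ P.bubbles }),
    if k = rep C then f C else 0, ?_⟩
  funext C₀
  show (∑ k ∈ (C₀ : Finset I), ∑ C ∈ (Finset.univ : Finset { C // C ∈ P.bubbles }),
    if k = rep C then f C else 0) = f C₀
  rw [Finset.sum_comm]
  have hinner : ∀ C : { C // C ∈ P.bubbles },
      (∑ k ∈ (C₀ : Finset I), if k = rep C then f C else 0)
        = if rep C ∈ (C₀ : Finset I) then f C else 0 := by
    intro C
    rw [Finset.sum_ite_eq' (C₀ : Finset I) (rep C) (fun _ => f C)]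
  rw [Finset.sum_congr rfl (fun C _ => hinner C)]
  rw [Finset.sum_eq_single C₀]
  · rw [if_pos (hrepmem C₀)]
  · intro C _ hne
    rw [if_neg]
    intro hmem
    have hd : Disjoint (C : Finset I) (C₀ : Finset I) :=
      P.bubbles_disjoint C.2 C₀.2 (fun h => hne (Subtype.ext h))
    exact Finset.disjoint_left.mp hd (hrepmem C) hmem
  · intro h
    exact absurd (Finset.mem_univ C₀) h

lemma ker_bubSum_finrank (P : Preo I) :
    Module.finrank ℝ (LinearMap.ker (bubSum (I := I) P))
      = Fintype.card I - P.bubbles.card := by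
  have h := LinearMap.finrank_range_add_finrank_ker (bubSum (I := I) P)
  rw [LinearMap.range_eq_top.mpr (bubSum_surj P), finrank_top] at h
  have h2 : Module.finrank ℝ ({ C // C ∈ P.bubbles } → ℝ) = P.bubbles.card := by
    rw [Module.finrank_pi]
    exact Fintype.card_coe _
  have h3 : Module.finrank ℝ (I → ℝ) = Fintype.card I := Module.finrank_pi ℝ
  omega

end Chunk8
section Chunk9

variable {I : Type*} [Fintype I] [DecidableEq I] {z : Finset I → WithTop ℝ} {P : Preo I}

open Finset

set_option maxHeartbeats 2000000 in
lemma diff_mem_vectorSpan (hz0 : z ∅ = 0) (hzI : z Finset.univ ≠ ⊤)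
    (hsub : Submodular z) (hconf : Conforms z P) {i j : I} (hij : P.bubRel i j) :
    (fun k : I => (if k = i then (1:ℝ) else 0) - (if k = j then 1 else 0))
      ∈ vectorSpan ℝ (Phi z P) := by
  by_cases hijeq : i = j
  · subst hijeq
    have hzero : (fun k : I => (if k = i then (1:ℝ) else 0) - (if k = i then 1 else 0))
        = (0 : I → ℝ) := by
      funext k; simp
    rw [hzero]
    exact Submodule.zero_mem _
  have hc := hconf.1
  have hPhiEGP := phi_eq_EGP hz0 hsub hc
  have hne := compatible_to_phi_nonempty hz0 hzI hsub hc
  obtain ⟨x0, hx0⟩ := hne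
  set F : Finset (Finset I) := (Finset.univ : Finset I).powerset.filter
    (fun S => i ∈ S ∧ j ∉ S ∧ zP z P S ≠ ⊤) with hFdef
  have hFmem : ∀ S, S ∈ F ↔ (i ∈ S ∧ j ∉ S ∧ zP z P S ≠ ⊤) := by
    intro S
    rw [hFdef, Finset.mem_filter]
    constructor
    · rintro ⟨-, h⟩; exact h
    · intro h; exact ⟨Finset.mem_powerset.mpr (Finset.subset_univ S), h⟩
  have hslack : ∀ S, S ∈ F → ∃ x ∈ Phi z P, (∑ k ∈ S, x k : ℝ) < (zP z P S).untopD 0 := by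
    intro S hS
    obtain ⟨hiS, hjS, hSfin⟩ := (hFmem S).mp hS
    obtain ⟨rS, hrS⟩ := wt_ex hSfin
    by_contra hcon
    push_neg at hcon
    have hforced : ∀ x ∈ Phi z P, ((∑ k ∈ S, x k : ℝ) : WithTop ℝ) = zP z P S := by
      intro x hx
      have hx' : x ∈ EGP (zP z P) := by rw [← hPhiEGP]; exact hx
      have hle := hx'.2 S
      rw [hrS] at hle ⊢
      have hge := hcon x hx
      rw [hrS] at hge
      simp only [WithTop.untopD_coe] at hge
      have h1 : (∑ k ∈ S, x k : ℝ) ≤ rS := by exact_mod_cast hle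
      have h2 : (∑ k ∈ S, x k : ℝ) = rS := le_antisymm h1 hge
      exact_mod_cast h2
    exact forced_separating_false hz0 hzI hsub hconf hSfin hforced hij hiS hjS
  choose xs hxsPhi hxslt using hslack
  have hnF : (∅ : Finset I) ∉ F := by
    rw [hFmem]
    rintro ⟨h, -⟩
    exact absurd h (Finset.notMem_empty i)
  set G : Finset (Finset I) := insert ∅ F with hGdef
  have hGne : G.Nonempty := ⟨∅, Finset.mem_insert_self _ _⟩
  have hNpos : (0:ℝ) < (G.card : ℝ) := by
    have := Finset.card_pos.mpr hGne
    exact_mod_cast this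
  set g : Finset I → (I → ℝ) := fun S => if h : S ∈ F then xs S h else x0 with hgdef
  have hgPhi : ∀ S, g S ∈ Phi z P := by
    intro S
    by_cases h : S ∈ F
    · have : g S = xs S h := by simp only [hgdef]; rw [dif_pos h]
      rw [this]; exact hxsPhi S h
    · have : g S = x0 := by simp only [hgdef]; rw [dif_neg h]
      rw [this]; exact hx0
  set xstar : I → ℝ := ∑ S ∈ G, ((G.card : ℝ)⁻¹) • g S with hxstardef
  have hconvex : Convex ℝ (Phi z P) := by
    rw [hPhiEGP]
    exact EGP_convex _
  have hxstarPhi : xstar ∈ Phi z P := by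
    rw [hxstardef]
    refine hconvex.sum_mem (fun S _ => by positivity) ?_ (fun S _ => hgPhi S)
    rw [Finset.sum_const, nsmul_eq_mul]
    field_simp
  have hsumS : ∀ S : Finset I, (∑ k ∈ S, xstar k : ℝ)
      = ∑ S' ∈ G, (G.card : ℝ)⁻¹ * (∑ k ∈ S, g S' k) := by
    intro S
    have hpt : ∀ k, xstar k = ∑ S' ∈ G, (G.card : ℝ)⁻¹ * g S' k := by
      intro k
      rw [hxstardef, Finset.sum_apply]
      rfl
    rw [Finset.sum_congr rfl (fun k _ => hpt k), Finset.sum_comm]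
    refine Finset.sum_congr rfl (fun S' _ => ?_)
    rw [Finset.mul_sum]
  have hstrict : ∀ S ∈ F, (∑ k ∈ S, xstar k : ℝ) < (zP z P S).untopD 0 := by
    intro S hS
    obtain ⟨hiS, hjS, hSfin⟩ := (hFmem S).mp hS
    obtain ⟨rS, hrS⟩ := wt_ex hSfin
    have hle : ∀ S' ∈ G, (G.card:ℝ)⁻¹ * (∑ k ∈ S, g S' k) ≤ (G.card:ℝ)⁻¹ * rS := by
      intro S' _
      have hmem : g S' ∈ EGP (zP z P) := by rw [← hPhiEGP]; exact hgPhi S'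
      have h := hmem.2 S
      rw [hrS] at h
      have h' : (∑ k ∈ S, g S' k : ℝ) ≤ rS := by exact_mod_cast h
      exact mul_le_mul_of_nonneg_left h' (by positivity)
    have hlt : (G.card:ℝ)⁻¹ * (∑ k ∈ S, g S k) < (G.card:ℝ)⁻¹ * rS := by
      have h := hxslt S hS
      rw [hrS] at h
      simp only [WithTop.untopD_coe] at h
      have hgS : g S = xs S hS := by simp only [hgdef]; rw [dif_pos hS]
      rw [hgS]
      exact mul_lt_mul_of_pos_left h (by positivity)
    have hltsum := Finset.sum_lt_sum (fun S' h' => hle S' h')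
      ⟨S, Finset.mem_insert_of_mem hS, hlt⟩
    rw [hrS]
    simp only [WithTop.untopD_coe]
    rw [hsumS S]
    calc (∑ S' ∈ G, (G.card:ℝ)⁻¹ * (∑ k ∈ S, g S' k))
        < ∑ _S' ∈ G, (G.card:ℝ)⁻¹ * rS := hltsum
      _ = rS := by
          rw [Finset.sum_const, nsmul_eq_mul]
          field_simp
  set eps : ℝ := G.inf' hGne
    (fun S => if S ∈ F then (zP z P S).untopD 0 - (∑ k ∈ S, xstar k) else 1) with hepsdef
  have hepspos : 0 < eps := by
    rw [hepsdef, Finset.lt_inf'_iff]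
    intro S hS
    by_cases h : S ∈ F
    · rw [if_pos h]
      have := hstrict S h
      linarith
    · rw [if_neg h]; norm_num
  have hepsle : ∀ S ∈ F, eps ≤ (zP z P S).untopD 0 - (∑ k ∈ S, xstar k) := by
    intro S hS
    have hmemG : S ∈ G := by rw [hGdef]; exact Finset.mem_insert_of_mem hS
    have h : eps ≤ (if S ∈ F then (zP z P S).untopD 0 - (∑ k ∈ S, xstar k) else 1) := by
      rw [hepsdef]
      exact Finset.inf'_le _ hmemG
    rwa [if_pos hS] at h
  set x' : I → ℝ := fun k => xstar k
    + eps * ((if k = i then (1:ℝ) else 0) - (if k = j then 1 else 0)) with hx'def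
  have hdeltasum : ∀ S : Finset I, (∑ k ∈ S, x' k : ℝ)
      = (∑ k ∈ S, xstar k)
        + eps * ((if i ∈ S then (1:ℝ) else 0) - (if j ∈ S then 1 else 0)) := by
    intro S
    rw [hx'def]
    simp only
    rw [Finset.sum_add_distrib]
    congr 1
    rw [← Finset.mul_sum]
    congr 1
    rw [Finset.sum_sub_distrib]
    congr 1
    · exact Finset.sum_ite_eq' S i (fun _ => (1:ℝ))
    · exact Finset.sum_ite_eq' S j (fun _ => (1:ℝ))
  have hxstarEGP : xstar ∈ EGP (zP z P) := by rw [← hPhiEGP]; exact hxstarPhi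
  have hx'Phi : x' ∈ Phi z P := by
    rw [hPhiEGP]
    constructor
    · rw [hdeltasum Finset.univ]
      simp only [Finset.mem_univ, if_true]
      rw [sub_self, mul_zero, add_zero]
      exact hxstarEGP.1
    · intro S
      by_cases hStop : zP z P S = ⊤
      · rw [hStop]; exact le_top
      obtain ⟨rS, hrS⟩ := wt_ex hStop
      have hxsle : (∑ k ∈ S, xstar k : ℝ) ≤ rS := by
        have := hxstarEGP.2 S
        rw [hrS] at this
        exact_mod_cast this
      rw [hdeltasum S, hrS]
      by_cases hiS : i ∈ S
      · by_cases hjS : j ∈ S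
        · rw [if_pos hiS, if_pos hjS, sub_self, mul_zero, add_zero]
          exact_mod_cast hxsle
        · have hSF : S ∈ F := (hFmem S).mpr ⟨hiS, hjS, hStop⟩
          have hgap := hepsle S hSF
          rw [hrS] at hgap
          simp only [WithTop.untopD_coe] at hgap
          rw [if_pos hiS, if_neg hjS, sub_zero, mul_one]
          have hfin : (∑ k ∈ S, xstar k) + eps ≤ rS := by linarith
          exact_mod_cast hfin
      · rw [if_neg hiS]
        have hd : eps * ((0:ℝ) - (if j ∈ S then 1 else 0)) ≤ 0 := by
          by_cases hjS : j ∈ S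
          · rw [if_pos hjS]
            nlinarith [hepspos]
          · rw [if_neg hjS]; simp
        have hfin : (∑ k ∈ S, xstar k)
            + eps * ((0:ℝ) - (if j ∈ S then 1 else 0)) ≤ rS := by linarith
        exact_mod_cast hfin
  have hvsub : x' -ᵥ xstar ∈ vectorSpan ℝ (Phi z P) := vsub_mem_vectorSpan ℝ hx'Phi hxstarPhi
  have hsmul := Submodule.smul_mem _ (eps⁻¹) hvsub
  have heq : eps⁻¹ • (x' -ᵥ xstar)
      = fun k : I => (if k = i then (1:ℝ) else 0) - (if k = j then 1 else 0) := by
    funext k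
    rw [vsub_eq_sub]
    simp only [Pi.smul_apply, Pi.sub_apply, hx'def, smul_eq_mul]
    rw [add_sub_cancel_left]
    rw [inv_mul_cancel_left₀ (ne_of_gt hepspos)]
  rw [← heq]
  exact hsmul

end Chunk9
section Chunk10

variable {I : Type*} [Fintype I] [DecidableEq I] {z : Finset I → WithTop ℝ} {P : Preo I}

open Finset

set_option maxHeartbeats 1000000 in
lemma vectorSpan_phi_eq (hz0 : z ∅ = 0) (hzI : z Finset.univ ≠ ⊤)
    (hsub : Submodular z) (hconf : Conforms z P) :
    vectorSpan ℝ (Phi z P) = LinearMap.ker (bubSum (I := I) P) := by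
  have hc := hconf.1
  apply le_antisymm
  · rw [vectorSpan_def, Submodule.span_le]
    rintro v hv
    rw [Set.mem_vsub] at hv
    obtain ⟨x, hx, y, hy, rfl⟩ := hv
    rw [SetLike.mem_coe, LinearMap.mem_ker]
    funext C
    show (∑ k ∈ (C : Finset I), (x -ᵥ y) k) = 0
    obtain ⟨a, ha⟩ := (P.mem_bubbles).mp C.2
    have hconst := phi_bubble_sum_const hc hx hy a
    have hsplit : (∑ k ∈ (C : Finset I), (x -ᵥ y) k)
        = (∑ k ∈ (C : Finset I), x k) - (∑ k ∈ (C : Finset I), y k) := by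
      rw [← Finset.sum_sub_distrib]
      rfl
    rw [hsplit, ← ha, hconst, sub_self]
  · intro v hv
    rw [LinearMap.mem_ker] at hv
    have hv' : ∀ C : {C // C ∈ P.bubbles}, ∑ k ∈ (C : Finset I), v k = 0 := by
      intro C
      exact congrFun hv C
    have hrep : ∀ C : {C // C ∈ P.bubbles}, ∃ a : I, a ∈ (C : Finset I) :=
      fun C => P.bubbles_nonempty C.2
    choose rep hrepmem using hrep
    have hdecomp : v = ∑ C ∈ (Finset.univ : Finset {C // C ∈ P.bubbles}),
        ∑ k ∈ (C : Finset I), v k • (fun t : I =>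
          (if t = k then (1:ℝ) else 0) - (if t = rep C then 1 else 0)) := by
      funext t
      rw [Finset.sum_apply]
      have hinner : ∀ C : {C // C ∈ P.bubbles},
          (∑ k ∈ (C : Finset I), v k • (fun t : I =>
            (if t = k then (1:ℝ) else 0) - (if t = rep C then 1 else 0))) t
          = (if t ∈ (C : Finset I) then v t else 0) := by
        intro C
        rw [Finset.sum_apply]
        have hterm : ∀ k ∈ (C : Finset I),
            (v k • (fun t : I => (if t = k then (1:ℝ) else 0) - (if t = rep C then 1 else 0))) t
            = (if t = k then v k else 0) - v k * (if t = rep C then (1:ℝ) else 0) := by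
          intro k _
          simp only [Pi.smul_apply, smul_eq_mul]
          rw [mul_sub]
          congr 1
          split <;> simp
        rw [Finset.sum_congr rfl hterm, Finset.sum_sub_distrib]
        rw [Finset.sum_ite_eq (C : Finset I) t (fun k => v k)]
        rw [← Finset.sum_mul, hv' C, zero_mul, sub_zero]
      rw [Finset.sum_congr rfl (fun C _ => hinner C)]
      have hCt : (⟨P.bubble t, (P.mem_bubbles).mpr ⟨t, rfl⟩⟩ : {C // C ∈ P.bubbles})
          ∈ (Finset.univ : Finset {C // C ∈ P.bubbles}) := Finset.mem_univ _
      rw [Finset.sum_eq_single (⟨P.bubble t, (P.mem_bubbles).mpr ⟨t, rfl⟩⟩ : {C // C ∈ P.bubbles})]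
      · rw [if_pos (P.self_mem_bubble t)]
      · intro C _ hne
        rw [if_neg]
        intro hmem
        apply hne
        apply Subtype.ext
        show (C : Finset I) = P.bubble t
        obtain ⟨a, ha⟩ := (P.mem_bubbles).mp C.2
        rw [← ha] at hmem ⊢
        rw [P.bubble_eq_of_mem hmem]
      · intro h
        exact absurd hCt h
    rw [hdecomp]
    refine Submodule.sum_mem _ (fun C _ => Submodule.sum_mem _ (fun k hk => ?_))
    refine Submodule.smul_mem _ _ ?_
    have hbub : P.bubRel k (rep C) := by
      obtain ⟨a, ha⟩ := (P.mem_bubbles).mp C.2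
      have h1 : k ∈ P.bubble a := by rw [ha]; exact hk
      have h2 : rep C ∈ P.bubble a := by rw [ha]; exact hrepmem C
      rw [P.mem_bubble] at h1 h2
      exact ⟨P.le_trans h1.2 h2.1, P.le_trans h2.2 h1.1⟩
    exact diff_mem_vectorSpan hz0 hzI hsub hconf hbub

end Chunk10

/-- For a submodular `z` and a preorder `P` on `I`: the face `Φ_z(P)`
is nonempty iff `P` is compatible with `z`; in that case `Φ_z(P) = Π(z_P)`; and if `P`
conforms to `z` then `dim Φ_z(P) = |I| − |b(P)|`. -/
theorem phi_nonempty_iff_compatible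
    {I : Type*} [Fintype I] [DecidableEq I]
    (z : Finset I → WithTop ℝ) (hz0 : z ∅ = 0) (hzI : z Finset.univ ≠ ⊤)
    (hsub : Submodular z) (P : Preo I) :
    ((Phi z P).Nonempty ↔ Compatible z P) ∧
    (Compatible z P → Phi z P = EGP (zP z P)) ∧
    (Conforms z P →
      Module.finrank ℝ (affineSpan ℝ (Phi z P)).direction =
        Fintype.card I - P.bubbles.card) := by
  refine ⟨⟨fun h => phi_nonempty_to_compatible hsub h,
    fun hc => compatible_to_phi_nonempty hz0 hzI hsub hc⟩,
    fun hc => phi_eq_EGP hz0 hsub hc, ?_⟩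
  intro hconf
  rw [direction_affineSpan, vectorSpan_phi_eq hz0 hzI hsub hconf]
  exact ker_bubSum_finrank P
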